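/- arXiv:2008.10661 — 11 statements merged into one kernel-verified Lean document; each statement's English description precedes it below -/
import Mathlib

section
/- There exists a unique formal power series u ∈ ℚ[[q,t]] satisfying u = −q·(1−u)·(t + (1−t)·u) (any such u necessarily has zero constant term). Moreover, for all integers n ≥ 1 and k ≥ 1 the coefficient of q^n t^k in u equals ((−1)^{n+k+1}/n)·C(n+k, k−1)·C(n, k), where C(·,·) denotes the usual binomial coefficient of natural numbers, and the coefficient of q^n t^k is 0 whenever n = 0 or k = 0. -/
/-- The coefficient of `q^n t^k` in a two-variable formal power series over `ℚ`,
where `q` is the variable of index `0` and `t` is the variable of index `1`. -/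
noncomputable def coeffQT (n k : ℕ) (u : MvPowerSeries (Fin 2) ℚ) : ℚ :=
  MvPowerSeries.coeff (Finsupp.single 0 n + Finsupp.single 1 k) u

namespace Expp

abbrev M := MvPowerSeries (Fin 2) ℚ
abbrev P := PowerSeries ℚ

noncomputable def qT (n k : ℕ) : Fin 2 →₀ ℕ := Finsupp.single 0 n + Finsupp.single 1 k
@[simp] lemma qT_apply0 (n k : ℕ) : qT n k 0 = n := by simp [qT, Finsupp.single_apply]
@[simp] lemma qT_apply1 (n k : ℕ) : qT n k 1 = k := by simp [qT, Finsupp.single_apply]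
lemma qT_decomp (d : Fin 2 →₀ ℕ) : qT (d 0) (d 1) = d := by
  ext x; fin_cases x <;> simp [qT, Finsupp.single_apply]
lemma coeffQT_def (n k : ℕ) (u : M) : coeffQT n k u = MvPowerSeries.coeff (qT n k) u := rfl
lemma qT_eq_iff {n k n' k' : ℕ} : qT n k = qT n' k' ↔ n = n' ∧ k = k' := by
  constructor
  · intro h
    exact ⟨by simpa using congrArg (fun d : Fin 2 →₀ ℕ => d 0) h,
      by simpa using congrArg (fun d : Fin 2 →₀ ℕ => d 1) h⟩
  · rintro ⟨rfl, rfl⟩; rfl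
lemma qT_add (n k n' k' : ℕ) : qT n k + qT n' k' = qT (n + n') (k + k') := by
  ext x; fin_cases x <;> simp
lemma qT_le_iff {n k n' k' : ℕ} : qT n k ≤ qT n' k' ↔ n ≤ n' ∧ k ≤ k' := by
  constructor
  · intro h; exact ⟨by simpa using h 0, by simpa using h 1⟩
  · intro ⟨h1, h2⟩ x; fin_cases x <;> simpa
lemma qT_sub (n k n' k' : ℕ) : qT n k - qT n' k' = qT (n - n') (k - k') := by
  ext x; fin_cases x <;> simp [Finsupp.tsub_apply]
lemma ext_coeffQT {u v : M} (h : ∀ n k, coeffQT n k u = coeffQT n k v) : u = v := by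
  ext d
  have := h (d 0) (d 1)
  rwa [coeffQT_def, coeffQT_def, qT_decomp] at this
lemma coeffQT_mul (n k : ℕ) (u v : M) :
    coeffQT n k (u * v) =
      ∑ x ∈ Finset.HasAntidiagonal.antidiagonal n ×ˢ Finset.HasAntidiagonal.antidiagonal k,
        coeffQT x.1.1 x.2.1 u * coeffQT x.1.2 x.2.2 v := by
  rw [coeffQT_def, MvPowerSeries.coeff_mul]
  refine Finset.sum_nbij' (fun p => ((p.1 0, p.2 0), (p.1 1, p.2 1)))
    (fun x => (qT x.1.1 x.2.1, qT x.1.2 x.2.2)) ?_ ?_ ?_ ?_ ?_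
  · intro p hp
    rw [Finset.HasAntidiagonal.mem_antidiagonal] at hp
    simp only [Finset.mem_product, Finset.HasAntidiagonal.mem_antidiagonal]
    exact ⟨by simpa using congrArg (fun d : Fin 2 →₀ ℕ => d 0) hp,
      by simpa using congrArg (fun d : Fin 2 →₀ ℕ => d 1) hp⟩
  · intro x hx
    simp only [Finset.mem_product, Finset.HasAntidiagonal.mem_antidiagonal] at hx
    rw [Finset.HasAntidiagonal.mem_antidiagonal, qT_add, hx.1, hx.2]
  · intro p _; simp [qT_decomp]
  · intro x _; simp
  · intro p _; rw [coeffQT_def, coeffQT_def, qT_decomp, qT_decomp]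

/-! ### basic coefficient computations -/

lemma qT_single0 (n : ℕ) : qT n 0 = Finsupp.single 0 n := by simp [qT]

lemma qT_single1 (k : ℕ) : qT 0 k = Finsupp.single 1 k := by simp [qT]

lemma X0_eq : (MvPowerSeries.X 0 : M) = MvPowerSeries.monomial (qT 1 0) 1 := by
  rw [MvPowerSeries.X_def, qT_single0]

lemma X1_eq : (MvPowerSeries.X 1 : M) = MvPowerSeries.monomial (qT 0 1) 1 := by
  rw [MvPowerSeries.X_def, qT_single1]

lemma coeffQT_X0_mul (n k : ℕ) (v : M) :
    coeffQT n k (MvPowerSeries.X 0 * v) = if 1 ≤ n then coeffQT (n - 1) k v else 0 := by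
  rw [coeffQT_def, X0_eq, MvPowerSeries.coeff_monomial_mul]
  by_cases h : 1 ≤ n
  · rw [if_pos (qT_le_iff.2 ⟨h, Nat.zero_le _⟩), if_pos h, qT_sub, one_mul, coeffQT_def]
    simp
  · rw [if_neg (fun hc => h (qT_le_iff.1 hc).1), if_neg h]

lemma coeffQT_X1_mul (n k : ℕ) (v : M) :
    coeffQT n k (MvPowerSeries.X 1 * v) = if 1 ≤ k then coeffQT n (k - 1) v else 0 := by
  rw [coeffQT_def, X1_eq, MvPowerSeries.coeff_monomial_mul]
  by_cases h : 1 ≤ k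
  · rw [if_pos (qT_le_iff.2 ⟨Nat.zero_le _, h⟩), if_pos h, qT_sub, one_mul, coeffQT_def]
    simp
  · rw [if_neg (fun hc => h (qT_le_iff.1 hc).2), if_neg h]

lemma coeffQT_one (n k : ℕ) : coeffQT n k (1 : M) = if n = 0 ∧ k = 0 then 1 else 0 := by
  rw [coeffQT_def]
  rw [show (1 : M) = MvPowerSeries.monomial (qT 0 0) 1 by simp [qT]]
  rw [MvPowerSeries.coeff_monomial]
  simp [qT_eq_iff]

lemma coeffQT_X0 (n k : ℕ) : coeffQT n k (MvPowerSeries.X 0 : M) = if n = 1 ∧ k = 0 then 1 else 0 := by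
  rw [coeffQT_def, X0_eq, MvPowerSeries.coeff_monomial]
  simp [qT_eq_iff]

lemma coeffQT_X1 (n k : ℕ) : coeffQT n k (MvPowerSeries.X 1 : M) = if n = 0 ∧ k = 1 then 1 else 0 := by
  rw [coeffQT_def, X1_eq, MvPowerSeries.coeff_monomial]
  simp [qT_eq_iff]

/-! ### the transform `Tk` -/

noncomputable def Tk (k : ℕ) (u : M) : P := PowerSeries.mk fun n => coeffQT n k u

@[simp] lemma coeff_Tk (n k : ℕ) (u : M) :
    PowerSeries.coeff n (Tk k u) = coeffQT n k u := PowerSeries.coeff_mk _ _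

lemma ext_Tk {u v : M} (h : ∀ k, Tk k u = Tk k v) : u = v := by
  apply ext_coeffQT
  intro n k
  have := congrArg (PowerSeries.coeff n) (h k)
  simpa using this

lemma Tk_add (k : ℕ) (u v : M) : Tk k (u + v) = Tk k u + Tk k v := by
  ext n; simp [coeffQT_def, map_add]

lemma Tk_sub (k : ℕ) (u v : M) : Tk k (u - v) = Tk k u - Tk k v := by
  ext n; simp [coeffQT_def, map_sub]

lemma Tk_mul (k : ℕ) (u v : M) :
    Tk k (u * v) = ∑ r ∈ Finset.HasAntidiagonal.antidiagonal k, Tk r.1 u * Tk r.2 v := by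
  ext n
  rw [coeff_Tk, coeffQT_mul, map_sum, Finset.sum_product_right]
  apply Finset.sum_congr rfl
  intro r _
  rw [PowerSeries.coeff_mul]
  apply Finset.sum_congr rfl
  intro p _
  simp

lemma Tk_X0_mul (k : ℕ) (v : M) :
    Tk k (MvPowerSeries.X 0 * v) = PowerSeries.X * Tk k v := by
  ext n
  rcases n with _ | m
  · simp [coeffQT_X0_mul, PowerSeries.coeff_zero_X_mul]
  · rw [coeff_Tk, coeffQT_X0_mul, PowerSeries.coeff_succ_X_mul, if_pos (by omega)]
    simp

lemma Tk_X1_mul (k : ℕ) (v : M) :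
    Tk k (MvPowerSeries.X 1 * v) = if 1 ≤ k then Tk (k - 1) v else 0 := by
  ext n
  rw [coeff_Tk, coeffQT_X1_mul]
  by_cases h : 1 ≤ k <;> simp [h]

lemma Tk_X1 (k : ℕ) : Tk k (MvPowerSeries.X 1 : M) = if k = 1 then 1 else 0 := by
  ext n
  rw [coeff_Tk, coeffQT_X1]
  rcases eq_or_ne k 1 with rfl | h
  · simp [PowerSeries.coeff_one, and_comm]
  · simp [h]

lemma Tk_X0X1 (k : ℕ) :
    Tk k (MvPowerSeries.X 0 * MvPowerSeries.X 1 : M) = if k = 1 then PowerSeries.X else 0 := by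
  rw [Tk_X0_mul, Tk_X1]
  by_cases h : k = 1 <;> simp [h]



open PowerSeries

/-- `J m` is the power series `(1+X)^(-m)` (intended for `m ≥ 1`). -/
noncomputable def J (m : ℕ) : P :=
  PowerSeries.mk fun n => (-1 : ℚ) ^ n * ((m - 1 + n).choose n : ℚ)

@[simp] lemma coeff_J (m n : ℕ) :
    PowerSeries.coeff n (J m) = (-1 : ℚ) ^ n * ((m - 1 + n).choose n : ℚ) :=
  PowerSeries.coeff_mk _ _

lemma J_one_mul : (1 + PowerSeries.X) * J 1 = 1 := by
  ext n
  rw [add_mul, one_mul, map_add]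
  rcases n with _ | n
  · simp
  · rw [PowerSeries.coeff_succ_X_mul, coeff_J, coeff_J, PowerSeries.coeff_one]
    simp [pow_succ]

lemma J_step (m : ℕ) (hm : 1 ≤ m) : (1 + PowerSeries.X) * J (m + 1) = J m := by
  ext n
  rw [add_mul, one_mul, map_add]
  rcases n with _ | n
  · simp
  · rw [PowerSeries.coeff_succ_X_mul, coeff_J, coeff_J, coeff_J]
    have h1 : m + 1 - 1 + (n + 1) = (m - 1 + n) + 1 + 1 := by omega
    have h2 : m + 1 - 1 + n = (m - 1 + n) + 1 := by omega
    have h3 : m - 1 + (n + 1) = (m - 1 + n) + 1 := by omega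
    rw [h1, h2, h3, Nat.choose_succ_succ' (m - 1 + n + 1) n]
    push_cast
    ring

lemma J_unit (m : ℕ) (hm : 1 ≤ m) : (1 + PowerSeries.X) ^ m * J m = 1 := by
  induction m with
  | zero => omega
  | succ m ih =>
    rcases Nat.eq_zero_or_pos m with rfl | hm1
    · rw [pow_one]; exact J_one_mul
    · rw [pow_succ, mul_assoc, J_step m hm1, ih hm1]

lemma one_add_X_pow_ne (m : ℕ) : ((1 + PowerSeries.X) ^ m : P) ≠ 0 := by
  apply pow_ne_zero
  intro h
  have := congrArg (PowerSeries.constantCoeff) h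
  simp at this

lemma J_mul (a b : ℕ) (ha : 1 ≤ a) (hb : 1 ≤ b) : J a * J b = J (a + b) := by
  apply mul_left_cancel₀ (one_add_X_pow_ne (a + b))
  rw [J_unit (a + b) (by omega), pow_add]
  calc (1 + PowerSeries.X) ^ a * (1 + PowerSeries.X) ^ b * (J a * J b)
      = ((1 + PowerSeries.X) ^ a * J a) * ((1 + PowerSeries.X) ^ b * J b) := by ring
    _ = 1 := by rw [J_unit a ha, J_unit b hb, one_mul]

noncomputable def A (k : ℕ) : P :=
  if k = 0 then 0 else (PowerSeries.C (catalan (k - 1) : ℚ)) * (PowerSeries.X ^ k * J (2 * k - 1))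

@[simp] lemma A_zero : A 0 = 0 := if_pos rfl

lemma A_succ (m : ℕ) :
    A (m + 1) = (PowerSeries.C (catalan m : ℚ)) * (PowerSeries.X ^ (m+1) * J (2 * m + 1)) := by
  rw [A, if_neg (Nat.succ_ne_zero m), Nat.add_sub_cancel, show 2 * (m+1) - 1 = 2 * m + 1 by omega]

lemma catalan_sum_q (m : ℕ) :
    ∑ i ∈ Finset.range (m + 1), (catalan i : ℚ) * (catalan (m - i) : ℚ)
      = (catalan (m + 1) : ℚ) := by
  rw [catalan_succ' m, Finset.Nat.sum_antidiagonal_eq_sum_range_succ_mk]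
  push_cast
  rfl

lemma keyA (k : ℕ) :
    (if k = 1 then PowerSeries.X else 0) + ∑ r ∈ Finset.HasAntidiagonal.antidiagonal k, A r.1 * A r.2
      = A k + PowerSeries.X * A k := by
  match k with
  | 0 => simp
  | 1 =>
    rw [Finset.Nat.sum_antidiagonal_eq_sum_range_succ_mk, if_pos rfl,
      Finset.sum_range_succ, Finset.sum_range_one]
    simp only [Nat.sub_self, Nat.sub_zero, A_zero, zero_mul, mul_zero, add_zero, zero_add]
    have : A 1 + PowerSeries.X * A 1 = PowerSeries.X * ((1 + PowerSeries.X) * J 1) := by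
      rw [A_succ 0]
      simp only [catalan_zero, Nat.cast_one, map_one, one_mul, pow_one]
      ring
    rw [this, J_one_mul, mul_one]
  | (m + 2) =>
    rw [if_neg (by omega), zero_add, Finset.Nat.sum_antidiagonal_eq_sum_range_succ_mk,
      Finset.sum_range_succ', Finset.sum_range_succ]
    simp only [Nat.sub_self, A_zero, zero_mul, mul_zero, add_zero, Nat.sub_zero]
    have hterm : ∀ i ∈ Finset.range (m + 1),
        A (i + 1) * A (m + 2 - (i + 1))
          = (PowerSeries.C ((catalan i : ℚ) * (catalan (m - i) : ℚ))) *
              (PowerSeries.X ^ (m + 2) * J (2 * m + 2)) := by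
      intro i hi
      rw [Finset.mem_range] at hi
      have h1 : m + 2 - (i + 1) = (m - i) + 1 := by omega
      rw [h1, A_succ i, A_succ (m - i), map_mul]
      have h2 : J (2 * i + 1) * J (2 * (m - i) + 1) = J (2 * m + 2) := by
        rw [J_mul _ _ (by omega) (by omega),
          show 2 * i + 1 + (2 * (m - i) + 1) = 2 * m + 2 by omega]
      calc (PowerSeries.C (catalan i : ℚ)) * (PowerSeries.X ^ (i+1) * J (2*i+1)) *
            ((PowerSeries.C (catalan (m-i) : ℚ)) * (PowerSeries.X ^ (m-i+1) * J (2*(m-i)+1)))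
          = (PowerSeries.C (catalan i : ℚ)) * (PowerSeries.C (catalan (m-i) : ℚ)) *
            ((PowerSeries.X ^ (i+1) * PowerSeries.X ^ (m-i+1)) * (J (2*i+1) * J (2*(m-i)+1))) := by
            ring
        _ = _ := by
            rw [h2, ← pow_add, show i + 1 + (m - i + 1) = m + 2 by omega]
    rw [Finset.sum_congr rfl hterm, ← Finset.sum_mul, ← map_sum, catalan_sum_q m]
    have hrhs : A (m + 2) + PowerSeries.X * A (m + 2)
        = (PowerSeries.C (catalan (m+1) : ℚ)) *
            (PowerSeries.X ^ (m + 2) * ((1 + PowerSeries.X) * J (2 * m + 2 + 1))) := by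
      rw [A_succ (m + 1), show 2 * (m + 1) + 1 = 2 * m + 2 + 1 by omega]
      ring
    rw [hrhs, J_step (2 * m + 2) (by omega)]


open Nat

lemma cat_cast (m : ℕ) : ((m : ℚ) + 1) * (catalan m : ℚ) = ((2*m).choose m : ℚ) := by
  have := succ_mul_catalan_eq_centralBinom m
  rw [Nat.centralBinom] at this
  exact_mod_cast congrArg (fun x : ℕ => (x : ℚ)) this

lemma main_id (a b : ℕ) :
    (((2*a+b+4).choose (a+1) : ℚ)) * (((a+b+2).choose (a+2) : ℚ))
      + (((2*a+b+3).choose a : ℚ)) * (((a+b+2).choose (a+1) : ℚ))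
    = ((a+b+2 : ℕ) : ℚ) * ((catalan (a+1) : ℚ)) * (((2*a+b+3).choose (b+1) : ℚ)) := by
  have hcat : ((catalan (a+1) : ℚ)) = ((2*a+2).choose (a+1) : ℚ) / ((a:ℚ)+2) := by
    have h2 := cat_cast (a+1)
    rw [show 2*(a+1) = 2*a+2 by omega] at h2
    rw [eq_div_iff (by positivity)]
    push_cast at h2 ⊢
    linarith
  rw [hcat]
  rw [Nat.cast_choose ℚ (show a+1 ≤ 2*a+b+4 by omega),
      Nat.cast_choose ℚ (show a+2 ≤ a+b+2 by omega),
      Nat.cast_choose ℚ (show a ≤ 2*a+b+3 by omega),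
      Nat.cast_choose ℚ (show a+1 ≤ a+b+2 by omega),
      Nat.cast_choose ℚ (show a+1 ≤ 2*a+2 by omega),
      Nat.cast_choose ℚ (show b+1 ≤ 2*a+b+3 by omega)]
  rw [show 2*a+b+4 - (a+1) = a+b+3 by omega,
      show a+b+2 - (a+2) = b by omega,
      show 2*a+b+3 - a = a+b+3 by omega,
      show a+b+2 - (a+1) = b+1 by omega,
      show 2*a+2 - (a+1) = a+1 by omega,
      show 2*a+b+3 - (b+1) = 2*a+2 by omega]
  rw [show (2*a+b+4) = (2*a+b+3)+1 by omega, Nat.factorial_succ (2*a+b+3),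
      show (a+b+3) = (a+b+2)+1 by omega, Nat.factorial_succ (a+b+2),
      Nat.factorial_succ b,
      show (a+2) = (a+1)+1 by omega, Nat.factorial_succ (a+1),
      Nat.factorial_succ a]
  push_cast
  field_simp
  ring

noncomputable def ff (n k : ℕ) : ℚ :=
  if 1 ≤ n ∧ 1 ≤ k then
    (-1:ℚ)^(n+k+1)/(n:ℚ) * ((n+k).choose (k-1) : ℚ) * ((n.choose k : ℚ)) else 0

noncomputable def hh (n k : ℕ) : ℚ :=
  if 1 ≤ k ∧ k ≤ n then
    (catalan (k-1) : ℚ) * (-1:ℚ)^(n-k) * (((n+k-2).choose (n-k) : ℚ)) else 0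

lemma ff_pos {n k : ℕ} (hn : 1 ≤ n) (hk : 1 ≤ k) :
    ff n k = (-1:ℚ)^(n+k+1)/(n:ℚ) * ((n+k).choose (k-1) : ℚ) * ((n.choose k : ℚ)) :=
  if_pos ⟨hn, hk⟩

lemma ff_zero {n k : ℕ} (h : n = 0 ∨ k = 0) : ff n k = 0 := by
  rcases h with rfl | rfl <;> simp [ff]

lemma hh_pos {n k : ℕ} (hk : 1 ≤ k) (hkn : k ≤ n) :
    hh n k = (catalan (k-1) : ℚ) * (-1:ℚ)^(n-k) * (((n+k-2).choose (n-k) : ℚ)) :=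
  if_pos ⟨hk, hkn⟩

lemma hh_zero {n k : ℕ} (h : k = 0 ∨ n < k) : hh n k = 0 := by
  rcases h with rfl | h
  · simp [hh]
  · exact if_neg (by omega)

lemma neg_one_pow_two_mul_add (x y : ℕ) : (-1:ℚ)^(2*x + y) = (-1:ℚ)^y := by
  rw [pow_add, pow_mul, neg_one_sq, one_pow, one_mul]

lemma key1 (n k : ℕ) :
    ff n k - (if 1 ≤ k then ff n (k-1) else 0) + (if n = 0 ∧ k = 1 then 1 else 0)
      = hh (n+1) k := by
  match n, k with
  | n, 0 => rw [ff_zero (Or.inr rfl), hh_zero (Or.inl rfl), if_neg (by omega), if_neg (by omega)]; ring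
  | 0, k + 1 =>
    rw [ff_zero (Or.inl rfl), if_pos (by omega), show k+1-1 = k from rfl]
    rcases Nat.eq_zero_or_pos k with rfl | hk
    · rw [ff_zero (Or.inl rfl), if_pos ⟨rfl, rfl⟩, hh_pos le_rfl le_rfl]
      norm_num
    · rw [ff_zero (Or.inl rfl), if_neg (by omega), hh_zero (Or.inr (by omega))]
      ring
  | n + 1, 1 =>
    rw [ff_pos (by omega) le_rfl, if_pos le_rfl, ff_zero (Or.inr rfl),
      if_neg (by omega), hh_pos le_rfl (by omega)]
    rw [Nat.sub_self, Nat.choose_zero_right, Nat.choose_one_right,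
      show n+1+1-1 = n+1 by omega, show n+1+1+1-2 = n+1 by omega, Nat.choose_self,
      show n+1+1+1 = 2*1+(n+1) by omega, neg_one_pow_two_mul_add]
    push_cast
    have : ((n:ℚ)+1) ≠ 0 := by positivity
    field_simp
    simp
  | n + 1, k + 2 =>
    rw [if_pos (show 1 ≤ k+2 by omega), if_neg (show ¬(n+1 = 0 ∧ k+2 = 1) by omega),
      show k+2-1 = k+1 from rfl]
    rcases lt_trichotomy k n with hlt | heq | hgt
    · -- main case : 2 ≤ k+2 ≤ n+1
      obtain ⟨b, rfl⟩ : ∃ b, n = k + b + 1 := ⟨n - k - 1, by omega⟩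
      rw [ff_pos (by omega) (by omega), ff_pos (by omega) (by omega),
        hh_pos (by omega) (by omega)]
      rw [show k+b+1+1+(k+2)+1 = 2*(k+2)+(b+1) by omega, neg_one_pow_two_mul_add,
          show k+b+1+1+(k+1)+1 = 2*(k+1)+(b+2) by omega, neg_one_pow_two_mul_add]
      rw [show k+b+1+1+(k+2) = 2*k+b+4 by omega,
          show k+2-1 = k+1 from rfl,
          show k+b+1+1+(k+1) = 2*k+b+3 by omega,
          show k+1-1 = k from rfl,
          show k+b+1+1+1-(k+2) = b+1 by omega,
          show k+b+1+1+1+(k+2)-2 = 2*k+b+3 by omega,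
          show k+b+1+1 = k+b+2 by omega]
      have H := main_id k b
      have hb : (-1:ℚ)^(b+2) = -(-1:ℚ)^(b+1) := by rw [pow_succ]; ring
      rw [hb]
      have hden : ((k:ℚ)+b+2) ≠ 0 := by positivity
      push_cast at H ⊢
      field_simp
      linear_combination ((-1:ℚ)^(b+1)) * H
    · -- diagonal : k + 2 = n + 2
      subst heq
      rw [ff_pos (by omega) (by omega), ff_pos (by omega) (by omega),
        hh_pos (by omega) le_rfl]
      rw [show (k+1).choose (k+2) = 0 from Nat.choose_eq_zero_of_lt (by omega),
        Nat.sub_self, show k+1+1+(k+2)-2 = 2*k+2 by omega, Nat.choose_zero_right,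
        show k+1+(k+1) = 2*k+2 by omega,
        show k+1-1 = k from rfl, show k+2-1 = k+1 from rfl,
        Nat.choose_self, show 2*k+2+1 = 2*(k+1)+1 by omega, neg_one_pow_two_mul_add]
      have H1 := cat_cast (k+1)
      rw [show 2*(k+1) = 2*k+2 by omega] at H1
      have H2 : ((2*k+2).choose (k+1) : ℚ) * ((k:ℚ)+1) = ((2*k+2).choose k : ℚ) * ((k:ℚ)+2) := by
        have := Nat.choose_succ_right_eq (2*k+2) k
        rw [show 2*k+2-k = k+2 by omega] at this
        exact_mod_cast congrArg (fun x : ℕ => (x : ℚ)) this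
      have hk1 : ((k:ℚ)+1) ≠ 0 := by positivity
      have hk2 : ((k:ℚ)+2) ≠ 0 := by positivity
      push_cast at H1 H2
      have hk2 : ((k:ℚ)+2) ≠ 0 := by positivity
      have hc : ((2*k+2).choose k : ℚ) = ((k:ℚ)+1) * (catalan (k+1) : ℚ) := by
        apply mul_right_cancel₀ hk2
        linear_combination (-(1:ℚ))*H2 - ((k:ℚ)+1)*H1
      push_cast
      field_simp
      linear_combination hc
    · -- k + 2 > n + 2
      rw [ff_pos (by omega) (by omega), ff_pos (by omega) (by omega),
        hh_zero (Or.inr (by omega)),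
        show (n+1).choose (k+2) = 0 from Nat.choose_eq_zero_of_lt (by omega),
        show (n+1).choose (k+1) = 0 from Nat.choose_eq_zero_of_lt (by omega)]
      push_cast
      ring


/-! ### the series and the functional equation -/

noncomputable def U : M := fun d => ff (d 0) (d 1)

noncomputable def NN : M := fun d => hh (d 0) (d 1)

lemma coeffQT_U (n k : ℕ) : coeffQT n k U = ff n k := by
  rw [coeffQT_def, MvPowerSeries.coeff_apply]
  show ff (qT n k 0) (qT n k 1) = ff n k
  rw [qT_apply0, qT_apply1]

lemma coeffQT_NN (n k : ℕ) : coeffQT n k NN = hh n k := by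
  rw [coeffQT_def, MvPowerSeries.coeff_apply]
  show hh (qT n k 0) (qT n k 1) = hh n k
  rw [qT_apply0, qT_apply1]

lemma coeffQT_add (n k : ℕ) (u v : M) :
    coeffQT n k (u + v) = coeffQT n k u + coeffQT n k v := by
  simp [coeffQT_def, map_add]

lemma coeffQT_sub (n k : ℕ) (u v : M) :
    coeffQT n k (u - v) = coeffQT n k u - coeffQT n k v := by
  simp [coeffQT_def, map_sub]

/-- the linear identity: `q(1-t)U + qt = N`. -/
lemma G1 : MvPowerSeries.X 0 * (U - MvPowerSeries.X 1 * U) + MvPowerSeries.X 0 * MvPowerSeries.X 1 = NN := by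
  apply ext_coeffQT
  intro n k
  rw [coeffQT_add, coeffQT_X0_mul, coeffQT_NN]
  have hx : coeffQT n k (MvPowerSeries.X 0 * MvPowerSeries.X 1 : M) = if n = 1 ∧ k = 1 then 1 else 0 := by
    rw [coeffQT_X0_mul]
    by_cases h : 1 ≤ n
    · rw [if_pos h, coeffQT_X1]
      by_cases h2 : n = 1 ∧ k = 1
      · rw [if_pos (show n - 1 = 0 ∧ k = 1 by omega), if_pos h2]
      · rw [if_neg (show ¬(n - 1 = 0 ∧ k = 1) by omega), if_neg h2]
    · rw [if_neg h, if_neg (by omega)]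
  rw [hx]
  by_cases h : 1 ≤ n
  · rw [if_pos h]
    rw [coeffQT_sub, coeffQT_U, coeffQT_X1_mul, coeffQT_U]
    have hkey := key1 (n - 1) k
    rw [show n - 1 + 1 = n by omega] at hkey
    rw [if_congr (show (n = 1 ∧ k = 1) ↔ (n - 1 = 0 ∧ k = 1) by omega) rfl rfl]
    exact hkey
  · rw [if_neg h]
    have hn : n = 0 := by omega
    subst hn
    rw [if_neg (by omega), hh, if_neg (by omega)]
    ring

lemma Tk_NN (k : ℕ) : Tk k NN = A k := by
  ext n
  rw [coeff_Tk, coeffQT_NN]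
  match k with
  | 0 => rw [A_zero, hh_zero (Or.inl rfl), map_zero]
  | k + 1 =>
    rw [A_succ, PowerSeries.coeff_C_mul, PowerSeries.coeff_X_pow_mul']
    by_cases h : k + 1 ≤ n
    · rw [if_pos h, coeff_J, hh_pos (by omega) h]
      rw [show 2*k+1-1+(n-(k+1)) = n+(k+1)-2 by omega, show k+1-1 = k from rfl]
      ring
    · rw [if_neg h, hh_zero (Or.inr (by omega)), mul_zero]

/-- the quadratic identity for `N`. -/
lemma G2 : MvPowerSeries.X 0 * MvPowerSeries.X 1 + NN * NN = NN + MvPowerSeries.X 0 * NN := by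
  apply ext_Tk
  intro k
  rw [Tk_add, Tk_add, Tk_X0X1, Tk_mul, Tk_X0_mul, Tk_NN]
  rw [Finset.sum_congr rfl (fun r _ => by rw [Tk_NN, Tk_NN])]
  exact keyA k

lemma X0_ne : (MvPowerSeries.X 0 : M) ≠ 0 := by
  intro h
  have h2 := coeffQT_X0 1 0
  rw [h, if_pos ⟨rfl, rfl⟩] at h2
  simp [coeffQT_def] at h2

lemma one_sub_X1_ne : (1 - MvPowerSeries.X 1 : M) ≠ 0 := by
  intro h
  have := congrArg (MvPowerSeries.constantCoeff) h
  simp [MvPowerSeries.constantCoeff_X] at this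

/-- the functional equation for `U`. -/
lemma G3 : U = -(MvPowerSeries.X 0) * (1 - U) * (MvPowerSeries.X 1 + (1 - MvPowerSeries.X 1) * U) := by
  set W : M := MvPowerSeries.X 1 + (1 - MvPowerSeries.X 1) * U with hW
  have hNN : MvPowerSeries.X 0 * W = NN := by
    rw [← G1, hW]; ring
  have E1 : MvPowerSeries.X 1 + MvPowerSeries.X 0 * (W * W) = W + MvPowerSeries.X 0 * W := by
    have h0 : MvPowerSeries.X 0 * (MvPowerSeries.X 1 + MvPowerSeries.X 0 * (W * W) - (W + MvPowerSeries.X 0 * W)) = 0 := by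
      have h2 := G2
      rw [← hNN] at h2
      linear_combination h2
    rcases mul_eq_zero.mp h0 with h | h
    · exact absurd h X0_ne
    · linear_combination h
  have key : (1 - MvPowerSeries.X 1) * (U + MvPowerSeries.X 0 * (1 - U) * W) = 0 := by
    have hWU : (1 - MvPowerSeries.X 1) * U = W - MvPowerSeries.X 1 := by rw [hW]; ring
    calc (1 - MvPowerSeries.X 1) * (U + MvPowerSeries.X 0 * (1 - U) * W)
        = (1 - MvPowerSeries.X 1) * U + MvPowerSeries.X 0 * W * ((1 - MvPowerSeries.X 1) * (1 - U)) := by ring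
      _ = (W - MvPowerSeries.X 1) + MvPowerSeries.X 0 * W * (1 - W) := by
          rw [hWU]
          congr 2
          calc (1 - MvPowerSeries.X 1) * (1 - U) = 1 - MvPowerSeries.X 1 - (1 - MvPowerSeries.X 1) * U := by ring
            _ = 1 - W := by rw [hWU]; ring
      _ = (W + MvPowerSeries.X 0 * W) - (MvPowerSeries.X 1 + MvPowerSeries.X 0 * (W * W)) := by ring
      _ = 0 := by rw [E1]; ring
  rcases mul_eq_zero.mp key with h | h
  · exact absurd h one_sub_X1_ne
  · linear_combination h

lemma uniq (u v : M)
    (hu : u = -(MvPowerSeries.X 0) * (1 - u) * (MvPowerSeries.X 1 + (1 - MvPowerSeries.X 1) * u))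
    (hv : v = -(MvPowerSeries.X 0) * (1 - v) * (MvPowerSeries.X 1 + (1 - MvPowerSeries.X 1) * v)) : u = v := by
  have key : (u - v) * (1 + MvPowerSeries.X 0 * ((1 - 2 * MvPowerSeries.X 1) - (1 - MvPowerSeries.X 1) * (u + v))) = 0 := by
    linear_combination hu - hv
  rcases mul_eq_zero.mp key with h | h
  · linear_combination h
  · exfalso
    have hc := congrArg (MvPowerSeries.constantCoeff) h
    simp [MvPowerSeries.constantCoeff_X] at hc

end Expp

/-- There is a unique formal power series `u ∈ ℚ[[q,t]]` with
`u = -q·(1-u)·(t+(1-t)·u)`; its coefficient of `q^n t^k` is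
`((-1)^(n+k+1)/n)·C(n+k,k-1)·C(n,k)` for `n, k ≥ 1`, and `0` if `n = 0` or `k = 0`. -/
theorem stmt0 :
    (∃! u : MvPowerSeries (Fin 2) ℚ,
        u = -(MvPowerSeries.X 0) * (1 - u) * (MvPowerSeries.X 1 + (1 - MvPowerSeries.X 1) * u)) ∧
    ∀ u : MvPowerSeries (Fin 2) ℚ,
      u = -(MvPowerSeries.X 0) * (1 - u) * (MvPowerSeries.X 1 + (1 - MvPowerSeries.X 1) * u) →
        (∀ n k : ℕ, 1 ≤ n → 1 ≤ k →
          coeffQT n k u =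
            ((-1 : ℚ) ^ (n + k + 1) / (n : ℚ)) *
              ((n + k).choose (k - 1) : ℚ) * (n.choose k : ℚ)) ∧
        (∀ n k : ℕ, n = 0 ∨ k = 0 → coeffQT n k u = 0) := by
  constructor
  · exact ⟨Expp.U, Expp.G3, fun y hy => Expp.uniq y Expp.U hy Expp.G3⟩
  · intro u hu
    have hU : u = Expp.U := Expp.uniq u Expp.U hu Expp.G3
    subst hU
    constructor
    · intro n k hn hk
      rw [Expp.coeffQT_U, Expp.ff_pos hn hk]
    · intro n k h
      rw [Expp.coeffQT_U, Expp.ff_zero h]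
end

section
/- Let u ∈ ℚ[[q,t]] be the unique formal power series satisfying u = −q·(1−u)·(t + (1−t)·u). For j = 1, 2 let U_j ∈ ℚ[[q]] be the one-variable power series whose coefficient of q^n equals the coefficient of q^n t^j in u. Then (1+q)·U₁ = −q and (1+q)³·U₂ = −q²·(2+q) as identities in ℚ[[q]]. (Equivalently, after the substitution t = 1−y, one has u = (1−y)·(−q/(1+q)) + (1−y)²·(−q²(2+q)/(1+q)³) + O((1−y)³).) -/
open Finsupp in
lemma fin2_eq (f : Fin 2 →₀ ℕ) : single 0 (f 0) + single 1 (f 1) = f := by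
  ext a
  fin_cases a <;> simp [Finsupp.single_apply]

open Finsupp in
lemma apply0 (n k : ℕ) : (single (0:Fin 2) n + single 1 k : Fin 2 →₀ ℕ) 0 = n := by
  simp [Finsupp.single_apply]

open Finsupp in
lemma apply1 (n k : ℕ) : (single (0:Fin 2) n + single 1 k : Fin 2 →₀ ℕ) 1 = k := by
  simp [Finsupp.single_apply]

open Finsupp in
lemma coeffQT_mul (n k : ℕ) (a b : MvPowerSeries (Fin 2) ℚ) :
    coeffQT n k (a * b) = ∑ p ∈ Finset.HasAntidiagonal.antidiagonal n, ∑ r ∈ Finset.HasAntidiagonal.antidiagonal k,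
      coeffQT p.1 r.1 a * coeffQT p.2 r.2 b := by
  classical
  rw [coeffQT, MvPowerSeries.coeff_mul]
  rw [← Finset.sum_product']
  refine Finset.sum_nbij' (i := fun p => ((p.1 0, p.2 0), (p.1 1, p.2 1)))
    (j := fun q => (single 0 q.1.1 + single 1 q.2.1, single 0 q.1.2 + single 1 q.2.2))
    ?_ ?_ ?_ ?_ ?_
  · rintro ⟨f, g⟩ hm
    rw [Finset.HasAntidiagonal.mem_antidiagonal] at hm
    simp only [Finset.mem_product, Finset.HasAntidiagonal.mem_antidiagonal]
    constructor
    · have := congrArg (fun h => h 0) hm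
      simpa [apply0] using this
    · have := congrArg (fun h => h 1) hm
      simpa [apply1] using this
  · rintro ⟨⟨x, y⟩, ⟨i, j⟩⟩ hm
    simp only [Finset.mem_product, Finset.HasAntidiagonal.mem_antidiagonal] at hm
    rw [Finset.HasAntidiagonal.mem_antidiagonal]
    obtain ⟨h1, h2⟩ := hm
    have : single (0:Fin 2) n + single 1 k =
        single 0 x + single 0 y + (single 1 i + single 1 j) := by
      rw [← Finsupp.single_add, ← Finsupp.single_add, h1, h2]
    rw [this]; exact add_add_add_comm _ _ _ _
  · rintro ⟨f, g⟩ hm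
    simp only [Prod.mk.injEq]
    exact ⟨fin2_eq f, fin2_eq g⟩
  · rintro ⟨⟨x, y⟩, ⟨i, j⟩⟩ hm
    simp [apply0, apply1]
  · rintro ⟨f, g⟩ hm
    simp only [coeffQT, fin2_eq]
open Finsupp in
lemma coeffQT_Xq_mul (n k : ℕ) (v : MvPowerSeries (Fin 2) ℚ) :
    coeffQT n k (MvPowerSeries.X 0 * v) = if n = 0 then 0 else coeffQT (n-1) k v := by
  classical
  rw [coeffQT, MvPowerSeries.X_def, MvPowerSeries.coeff_monomial_mul]
  rcases Nat.eq_zero_or_pos n with h | h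
  · subst h
    rw [if_neg, if_pos rfl]
    intro hle
    rw [Finsupp.le_def] at hle
    have := hle 0
    simp [apply0, Finsupp.single_apply] at this
  · have hm : (single (0:Fin 2) n + single 1 k) - single 0 1
        = single (0:Fin 2) (n-1) + single 1 k := by
      ext a
      fin_cases a <;> simp [Finsupp.tsub_apply, Finsupp.single_apply] <;> omega
    have hle : single (0:Fin 2) 1 ≤ single 0 n + single 1 k := by
      rw [Finsupp.le_def]; intro a
      fin_cases a <;> simp [Finsupp.single_apply] <;> omega
    rw [if_pos hle, hm, one_mul, if_neg (by omega), coeffQT]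

open Finsupp in
lemma coeffQT_Xt_mul (n k : ℕ) (v : MvPowerSeries (Fin 2) ℚ) :
    coeffQT n k (MvPowerSeries.X 1 * v) = if k = 0 then 0 else coeffQT n (k-1) v := by
  classical
  rw [coeffQT, MvPowerSeries.X_def, MvPowerSeries.coeff_monomial_mul]
  rcases Nat.eq_zero_or_pos k with h | h
  · subst h
    rw [if_neg, if_pos rfl]
    intro hle
    rw [Finsupp.le_def] at hle
    have := hle 1
    simp [apply1, Finsupp.single_apply] at this
  · have hm : (single (0:Fin 2) n + single 1 k) - single 1 1
        = single (0:Fin 2) n + single 1 (k-1) := by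
      ext a
      fin_cases a <;> simp [Finsupp.tsub_apply, Finsupp.single_apply] <;> omega
    have hle : single (1:Fin 2) 1 ≤ single 0 n + single 1 k := by
      rw [Finsupp.le_def]; intro a
      fin_cases a <;> simp [Finsupp.single_apply] <;> omega
    rw [if_pos hle, hm, one_mul, if_neg (by omega), coeffQT]

lemma coeffQT_one (n k : ℕ) :
    coeffQT n k 1 = if n = 0 ∧ k = 0 then 1 else 0 := by
  classical
  rw [coeffQT, MvPowerSeries.coeff_one]
  congr 1
  simp only [eq_iff_iff]
  constructor
  · intro h
    constructor
    · have := congrArg (fun f => f 0) h; simpa [apply0] using this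
    · have := congrArg (fun f => f 1) h; simpa [apply1] using this
  · rintro ⟨rfl, rfl⟩; simp

lemma coeffQT_add (n k : ℕ) (a b : MvPowerSeries (Fin 2) ℚ) :
    coeffQT n k (a + b) = coeffQT n k a + coeffQT n k b := by simp [coeffQT]

lemma coeffQT_sub (n k : ℕ) (a b : MvPowerSeries (Fin 2) ℚ) :
    coeffQT n k (a - b) = coeffQT n k a - coeffQT n k b := by simp [coeffQT]

lemma coeffQT_neg (n k : ℕ) (a : MvPowerSeries (Fin 2) ℚ) :
    coeffQT n k (-a) = -coeffQT n k a := by simp [coeffQT]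

lemma coeffQT_Xt (n k : ℕ) :
    coeffQT n k (MvPowerSeries.X 1 : MvPowerSeries (Fin 2) ℚ)
      = if n = 0 ∧ k = 1 then 1 else 0 := by
  rw [show (MvPowerSeries.X 1 : MvPowerSeries (Fin 2) ℚ) = MvPowerSeries.X 1 * 1 from
    (mul_one _).symm, coeffQT_Xt_mul]
  rcases Nat.eq_zero_or_pos k with h | h
  · subst h; simp
  · rw [if_neg (by omega), coeffQT_one]
    by_cases hn : n = 0 <;> by_cases hk : k = 1 <;> simp_all <;> omega

/-- The one-variable series whose coefficient of `q^n` is the coefficient of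
`q^n t^j` in `u`. -/
noncomputable def sliceT (j : ℕ) (u : MvPowerSeries (Fin 2) ℚ) : PowerSeries ℚ :=
  PowerSeries.mk fun n => coeffQT n j u

/-- For the unique solution `u` of `u = -q(1-u)(t+(1-t)u)`, the coefficients of
`t¹` and `t²` satisfy `(1+q)·U₁ = -q` and `(1+q)³·U₂ = -q²(2+q)`. -/
theorem stmt1 (u : MvPowerSeries (Fin 2) ℚ)
    (hu : u = -(MvPowerSeries.X 0) * (1 - u) *
        (MvPowerSeries.X 1 + (1 - MvPowerSeries.X 1) * u)) :
    (1 + PowerSeries.X) * sliceT 1 u = -PowerSeries.X ∧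
    (1 + PowerSeries.X) ^ 3 * sliceT 2 u =
      -(PowerSeries.X ^ 2) * (2 + PowerSeries.X) := by
  classical
  have hu' : u = -(MvPowerSeries.X 0 * MvPowerSeries.X 1)
      - MvPowerSeries.X 0 * u
      + (MvPowerSeries.X 0 * (MvPowerSeries.X 1 * u)
         + MvPowerSeries.X 0 * (MvPowerSeries.X 1 * u))
      + MvPowerSeries.X 0 * (u * u)
      - MvPowerSeries.X 0 * (MvPowerSeries.X 1 * (u * u)) := by
    linear_combination hu
  -- coefficient of q^0
  have h0 : ∀ k, coeffQT 0 k u = 0 := by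
    intro k
    conv_lhs => rw [hu']
    simp [coeffQT_add, coeffQT_sub, coeffQT_neg, coeffQT_Xq_mul]
  -- master recurrence
  have key : ∀ n k, coeffQT (n+1) k u =
      -(if n = 0 ∧ k = 1 then 1 else 0)
      - coeffQT n k u
      + ((if k = 0 then 0 else coeffQT n (k-1) u)
         + (if k = 0 then 0 else coeffQT n (k-1) u))
      + coeffQT n k (u*u)
      - (if k = 0 then 0 else coeffQT n (k-1) (u*u)) := by
    intro n k
    conv_lhs => rw [hu']
    simp only [coeffQT_add, coeffQT_sub, coeffQT_neg, coeffQT_Xq_mul, coeffQT_Xt_mul,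
      coeffQT_Xt, Nat.succ_ne_zero, if_false, Nat.add_sub_cancel]
  -- t^0 slice vanishes
  have hA : ∀ n, coeffQT n 0 u = 0 := by
    intro n
    induction n using Nat.strong_induction_on with
    | _ n ih =>
      match n with
      | 0 => exact h0 0
      | (m+1) =>
        rw [key m 0, coeffQT_mul]
        have hz : ∀ p ∈ Finset.HasAntidiagonal.antidiagonal m, (∑ r ∈ Finset.HasAntidiagonal.antidiagonal 0,
            coeffQT p.1 r.1 u * coeffQT p.2 r.2 u) = 0 := by
          intro p hp
          rw [Finset.Nat.antidiagonal_zero, Finset.sum_singleton,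
            ih p.1 (by have := Finset.HasAntidiagonal.antidiagonal.fst_le hp; omega)]
          ring
        rw [Finset.sum_eq_zero hz, ih m (by omega)]
        simp
  have hdz0 : ∀ m, coeffQT m 0 (u*u) = 0 := by
    intro m
    rw [coeffQT_mul]
    refine Finset.sum_eq_zero fun p hp => ?_
    rw [Finset.Nat.antidiagonal_zero, Finset.sum_singleton, hA p.1]
    ring
  have hdz1 : ∀ m, coeffQT m 1 (u*u) = 0 := by
    intro m
    rw [coeffQT_mul]
    refine Finset.sum_eq_zero fun p hp => ?_
    rw [show Finset.HasAntidiagonal.antidiagonal (1:ℕ) = {(0,1),(1,0)} from by decide,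
      Finset.sum_insert (by decide), Finset.sum_singleton, hA p.1, hA p.2]
    ring
  have h1 : (1 + PowerSeries.X) * sliceT 1 u = -(PowerSeries.X : PowerSeries ℚ) := by
    ext n
    rw [add_mul, one_mul, map_add, map_neg, PowerSeries.coeff_X]
    cases n with
    | zero =>
      rw [PowerSeries.coeff_zero_X_mul]
      simp [sliceT, PowerSeries.coeff_mk, h0]
    | succ n =>
      rw [PowerSeries.coeff_succ_X_mul]
      simp only [sliceT, PowerSeries.coeff_mk]
      rw [key n 1, hA n, hdz0 n, hdz1 n]
      rcases eq_or_ne n 0 with rfl | hn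
      · simp
      · simp [hn]
  have h2 : (1 + PowerSeries.X) * sliceT 2 u =
      PowerSeries.X * sliceT 1 u + PowerSeries.X * sliceT 1 u
      + PowerSeries.X * (sliceT 1 u * sliceT 1 u) := by
    ext n
    rw [add_mul, one_mul, map_add, map_add, map_add]
    cases n with
    | zero =>
      rw [PowerSeries.coeff_zero_X_mul, PowerSeries.coeff_zero_X_mul,
        PowerSeries.coeff_zero_X_mul]
      simp [sliceT, PowerSeries.coeff_mk, h0]
    | succ n =>
      rw [PowerSeries.coeff_succ_X_mul, PowerSeries.coeff_succ_X_mul,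
        PowerSeries.coeff_succ_X_mul]
      simp only [sliceT, PowerSeries.coeff_mk]
      rw [key n 2, hdz1 n]
      have hd2 : coeffQT n 2 (u*u) = PowerSeries.coeff n (sliceT 1 u * sliceT 1 u) := by
        rw [coeffQT_mul, PowerSeries.coeff_mul]
        refine Finset.sum_congr rfl fun p hp => ?_
        rw [show Finset.HasAntidiagonal.antidiagonal (2:ℕ) = {(0,2),(1,1),(2,0)} from by decide,
          Finset.sum_insert (by decide), Finset.sum_insert (by decide),
          Finset.sum_singleton, hA p.1, hA p.2]
        simp [sliceT, PowerSeries.coeff_mk]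
      rw [hd2]
      simp [sliceT]
      ring
  refine ⟨h1, ?_⟩
  linear_combination (1 + PowerSeries.X)^2 * h2
    + (PowerSeries.X * ((1 + PowerSeries.X) * sliceT 1 u + PowerSeries.X + 2)) * h1
end

section
/- With notation as in the context (so H_1,…,H_N, 1−H̃_1,…,1−H̃_r is a list with multiplicity of the roots of z^N(1−z)^r = q, with q ≠ 0), one has the product identity ∏_{i=1}^N (1−H_i)^r = ∏_{j=1}^r (1−H̃_j)^N. -/
open Polynomial

/-- If `H_1, …, H_N, 1-H̃_1, …, 1-H̃_r` is a list with multiplicity of the roots of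
`z^N (1-z)^r = q` with `q ≠ 0`, then `∏ (1-H_i)^r = ∏ (1-H̃_j)^N`. -/
theorem stmt3 (N r : ℕ) (hN : 1 ≤ N) (hr : 1 ≤ r) (q : ℂ) (hq : q ≠ 0)
    (H : Fin N → ℂ) (Ht : Fin r → ℂ)
    (hroots : (X ^ N * (1 - X) ^ r - C q : ℂ[X]) =
      (-1) ^ r * (∏ i, (X - C (H i))) * ∏ j, (X - C (1 - Ht j))) :
    ∏ i, (1 - H i) ^ r = ∏ j, (1 - Ht j) ^ N := by
  -- Each `H i` is a root of `z^N (1-z)^r = q`.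
  have hHi : ∀ i, H i ^ N * (1 - H i) ^ r = q := by
    intro i
    have h := congrArg (Polynomial.eval (H i)) hroots
    simp [eval_prod, Finset.prod_eq_zero (Finset.mem_univ i)] at h
    linear_combination h
  -- Multiplying over all `i`:
  have hA : (∏ i, (1 - H i)) ^ r * (∏ i, H i) ^ N = q ^ N := by
    have h : ∏ i, (H i ^ N * (1 - H i) ^ r) = q ^ N := by simp [hHi]
    rw [Finset.prod_mul_distrib, Finset.prod_pow, Finset.prod_pow] at h
    linear_combination h
  -- Evaluation at `0` gives the product of all roots.
  have h0 : (∏ i, H i) * (∏ j, (1 - Ht j)) = (-1 : ℂ) ^ (N + 1) * q := by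
    have h := congrArg (Polynomial.eval 0) hroots
    simp [eval_prod, zero_pow (by omega : N ≠ 0)] at h
    have h1 : ∏ x : Fin N, (-H x) = (-1 : ℂ) ^ N * ∏ x, H x := by
      have e : ∀ x : Fin N, -H x = -1 * H x := fun x => by ring
      rw [Finset.prod_congr rfl fun x _ => e x, Finset.prod_mul_distrib,
        Finset.prod_const, Finset.card_univ, Fintype.card_fin]
    have h2 : ∏ x : Fin r, (Ht x - 1) = (-1 : ℂ) ^ r * ∏ x, (1 - Ht x) := by
      have e : ∀ x : Fin r, Ht x - 1 = -1 * (1 - Ht x) := fun x => by ring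
      rw [Finset.prod_congr rfl fun x _ => e x, Finset.prod_mul_distrib,
        Finset.prod_const, Finset.card_univ, Fintype.card_fin]
    rw [h1, h2] at h
    have eb : ((-1 : ℂ)) ^ r * (-1) ^ r = 1 := by
      rw [← pow_add]; exact Even.neg_one_pow ⟨r, rfl⟩
    have ea : ((-1 : ℂ)) ^ N * (-1) ^ N = 1 := by
      rw [← pow_add]; exact Even.neg_one_pow ⟨N, rfl⟩
    linear_combination (-(-1 : ℂ) ^ N) * h
      - ((∏ i, H i) * (∏ j, (1 - Ht j)) * (-1) ^ r * (-1) ^ r) * ea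
      - ((∏ i, H i) * (∏ j, (1 - Ht j))) * eb
  -- Raise to the `N`-th power; `(-1)^{N(N+1)} = 1`.
  have hB : (∏ i, H i) ^ N * (∏ j, (1 - Ht j)) ^ N = q ^ N := by
    have h0N : ((∏ i, H i) * (∏ j, (1 - Ht j))) ^ N = ((-1 : ℂ) ^ (N + 1) * q) ^ N := by
      rw [h0]
    rw [mul_pow, mul_pow, ← pow_mul] at h0N
    rw [Even.neg_one_pow (by rw [mul_comm]; exact Nat.even_mul_succ_self N), one_mul] at h0N
    exact h0N
  -- Cancel the common nonzero factor `(∏ H i)^N`.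
  have hPN : (∏ i, H i) ^ N ≠ 0 := by
    intro hz
    rw [hz, mul_zero] at hA
    exact pow_ne_zero N hq hA.symm
  rw [Finset.prod_pow, Finset.prod_pow]
  apply mul_right_cancel₀ hPN
  rw [hA]
  linear_combination -hB
end

section
/- With notation as in the context, assume in addition that H_1,…,H_N are pairwise distinct and H̃_1,…,H̃_r are pairwise distinct. Then ∏_{i=1}^N (N/H_i − r/(1−H_i)) · ∏_{i=1}^N H_i^N · ∏_{i=1}^N (1−H_i)^{−r} · ∏_{i≠i'} (H_{i} − H_{i'})^{−1} = ∏_{j=1}^r (r/H̃_j − N/(1−H̃_j)) · ∏_{j=1}^r H̃_j^r · ∏_{j=1}^r (1−H̃_j)^{−N} · ∏_{j≠j'} (H̃_{j} − H̃_{j'})^{−1}, where the products over i≠i' and j≠j' run over ordered pairs of distinct indices. -/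
open Polynomial Finset
open Polynomial Finset

lemma deriv_prod_fin {ι : Type*} [DecidableEq ι] (s : Finset ι) (f : ι → ℂ[X]) :
    derivative (∏ i ∈ s, f i) = ∑ i ∈ s, (∏ j ∈ s.erase i, f j) * derivative (f i) := by
  classical
  induction s using Finset.induction_on with
  | empty => simp
  | @insert a s ha ih =>
    rw [Finset.prod_insert ha, derivative_mul, ih, Finset.sum_insert ha, Finset.erase_insert ha]
    have : ∑ b ∈ s, (∏ j ∈ (insert a s).erase b, f j) * derivative (f b)
        = f a * ∑ b ∈ s, (∏ j ∈ s.erase b, f j) * derivative (f b) := by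
      rw [Finset.mul_sum]
      refine Finset.sum_congr rfl fun b hb => ?_
      rw [Finset.erase_insert_of_ne (by rintro rfl; exact ha hb), Finset.prod_insert
        (fun h => ha (Finset.mem_of_mem_erase h))]
      ring
    rw [this]; ring

lemma key (N r : ℕ) (hN : 1 ≤ N) (hr : 1 ≤ r) (q : ℂ) (hq : q ≠ 0)
    (H : Fin N → ℂ) (Ht : Fin r → ℂ)
    (hroots : (X ^ N * (1 - X) ^ r - C q : ℂ[X]) =
      (-1) ^ r * (∏ i, (X - C (H i))) * ∏ j, (X - C (1 - Ht j)))
    (hHinj : Function.Injective H) :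
    (∏ i, ((N : ℂ) / H i - (r : ℂ) / (1 - H i))) * (∏ i, H i ^ N) *
        (∏ i, ((1 - H i) ^ r)⁻¹) *
        (∏ i, ∏ i' ∈ univ \ {i}, (H i - H i')⁻¹) =
      ∏ i, ((-1 : ℂ) ^ r * (∏ j, (H i + Ht j - 1)) * (H i ^ N * H i ^ N) * (q⁻¹ * q⁻¹)) := by
  obtain ⟨N', rfl⟩ : ∃ N', N = N' + 1 := ⟨N - 1, (Nat.succ_pred_eq_of_pos hN).symm⟩
  obtain ⟨r', rfl⟩ : ∃ r', r = r' + 1 := ⟨r - 1, (Nat.succ_pred_eq_of_pos hr).symm⟩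
  have hval : ∀ i, H i ^ (N' + 1) * (1 - H i) ^ (r' + 1) = q := by
    intro i
    have h := congrArg (Polynomial.eval (H i)) hroots
    simp only [eval_sub, eval_mul, eval_pow, eval_one, eval_X, eval_C, eval_prod,
      eval_neg] at h
    rw [Finset.prod_eq_zero (f := fun x => H i - H x) (mem_univ i) (sub_self _)] at h
    simp only [mul_zero, zero_mul] at h
    linear_combination h
  have hH0 : ∀ i, H i ≠ 0 := by
    intro i h
    apply hq; rw [← hval i, h]; simp
  have hH1 : ∀ i, (1 : ℂ) - H i ≠ 0 := by
    intro i h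
    apply hq; rw [← hval i, h]; simp
  have hderiv : ∀ i, ((N' + 1 : ℕ) : ℂ) * H i ^ N' * (1 - H i) ^ (r' + 1)
        - ((r' + 1 : ℕ) : ℂ) * (H i ^ (N' + 1) * (1 - H i) ^ r') =
      (-1) ^ (r' + 1) * (∏ i' ∈ univ \ {i}, (H i - H i')) * ∏ j, (H i + Ht j - 1) := by
    intro i
    have hD := congrArg (fun p => Polynomial.eval (H i) (Polynomial.derivative p)) hroots
    have hP1 : Polynomial.eval (H i) (derivative (∏ i, (X - C (H i)) : ℂ[X])) =
        ∏ i' ∈ univ \ {i}, (H i - H i') := by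
      rw [deriv_prod_fin, Polynomial.eval_finset_sum, Finset.sum_eq_single i]
      · simp [eval_prod, Finset.erase_eq]
      · intro b _ hb
        simp only [derivative_sub, derivative_X, derivative_C, sub_zero, mul_one, eval_mul,
          eval_prod]
        rw [Finset.prod_eq_zero (Finset.mem_erase.2 ⟨Ne.symm hb, mem_univ i⟩) (by simp)]
      · simp
    have h1 : Polynomial.eval (H i) (derivative (X ^ (N' + 1) * (1 - X) ^ (r' + 1) - C q : ℂ[X])) =
        ((N' + 1 : ℕ) : ℂ) * H i ^ N' * (1 - H i) ^ (r' + 1)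
          - ((r' + 1 : ℕ) : ℂ) * (H i ^ (N' + 1) * (1 - H i) ^ r') := by
      simp [derivative_pow]
      ring
    have h2 : Polynomial.eval (H i)
        (derivative ((-1) ^ (r' + 1) * (∏ i, (X - C (H i))) * ∏ j, (X - C (1 - Ht j)) : ℂ[X])) =
        (-1) ^ (r' + 1) * (∏ i' ∈ univ \ {i}, (H i - H i')) * ∏ j, (H i + Ht j - 1) := by
      rw [derivative_mul, derivative_mul]
      have hc : derivative ((-1 : ℂ[X]) ^ (r' + 1)) = 0 := by
        simp [derivative_pow]
      rw [hc, zero_mul, zero_add]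
      simp only [eval_add, eval_mul, eval_pow, eval_neg, eval_one, eval_prod, eval_sub, eval_X,
        eval_C]
      rw [hP1]
      rw [Finset.prod_eq_zero (f := fun x => H i - H x) (mem_univ i) (sub_self _)]
      rw [show (∏ j, (H i - (1 - Ht j))) = ∏ j, (H i + Ht j - 1) from
        Finset.prod_congr rfl fun j _ => by ring]
      ring
    rw [h1, h2] at hD
    exact hD
  rw [← Finset.prod_mul_distrib, ← Finset.prod_mul_distrib, ← Finset.prod_mul_distrib]
  refine Finset.prod_congr rfl fun i _ => ?_
  have hD1 : (∏ i' ∈ univ \ {i}, (H i - H i')) * (∏ i' ∈ univ \ {i}, (H i - H i')⁻¹) = 1 := by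
    rw [← Finset.prod_mul_distrib]
    refine Finset.prod_eq_one fun x hx => mul_inv_cancel₀ (sub_ne_zero.2 fun h => ?_)
    rw [Finset.mem_sdiff, Finset.mem_singleton] at hx
    exact hx.2 (hHinj h).symm
  have e2 : ((1 - H i) ^ (r' + 1))⁻¹ = H i ^ (N' + 1) * q⁻¹ := by
    rw [← hval i, mul_inv, ← mul_assoc, mul_inv_cancel₀ (pow_ne_zero _ (hH0 i)), one_mul]
  have e1 : ((N' + 1 : ℕ) : ℂ) / H i - ((r' + 1 : ℕ) : ℂ) / (1 - H i)
      = (-1) ^ (r' + 1) * (∏ i' ∈ univ \ {i}, (H i - H i')) * (∏ j, (H i + Ht j - 1)) * q⁻¹ := by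
    rw [eq_mul_inv_iff_mul_eq₀ hq, ← hderiv i, ← hval i]
    field_simp [hH0 i, hH1 i]
    ring
  rw [e1, e2]
  linear_combination ((-1 : ℂ) ^ (r' + 1) * (∏ j, (H i + Ht j - 1)) *
    (H i ^ (N' + 1) * H i ^ (N' + 1)) * (q⁻¹ * q⁻¹)) * hD1

lemma hroots_swap (N r : ℕ) (q : ℂ) (H : Fin N → ℂ) (Ht : Fin r → ℂ)
    (hroots : (X ^ N * (1 - X) ^ r - C q : ℂ[X]) =
      (-1) ^ r * (∏ i, (X - C (H i))) * ∏ j, (X - C (1 - Ht j))) :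
    (X ^ r * (1 - X) ^ N - C q : ℂ[X]) =
      (-1) ^ N * (∏ j, (X - C (Ht j))) * ∏ i, (X - C (1 - H i)) := by
  have h2 := congrArg (Polynomial.eval₂RingHom Polynomial.C (1 - X : ℂ[X])) hroots
  simp only [map_sub, map_mul, map_pow, map_prod, map_neg, map_one, coe_eval₂RingHom,
    eval₂_X, eval₂_C] at h2
  rw [show ((1:ℂ[X]) - (1 - X)) = X from by ring] at h2
  rw [show (∏ i, ((1:ℂ[X]) - X - C (H i))) = ∏ i, (-1) * (X - C (1 - H i)) from
    Finset.prod_congr rfl fun i _ => by rw [map_sub, map_one]; ring] at h2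
  rw [show (∏ j, ((1:ℂ[X]) - X - (1 - C (Ht j)))) = ∏ j, (-1) * (X - C (Ht j)) from
    Finset.prod_congr rfl fun j _ => by ring] at h2
  rw [Finset.prod_mul_distrib, Finset.prod_mul_distrib, Finset.prod_const,
    Finset.prod_const] at h2
  simp only [Finset.card_univ, Fintype.card_fin] at h2
  have hs : ((-1 : ℂ[X]) ^ r) * ((-1) ^ r) = 1 := by
    rw [← pow_add]; exact Even.neg_one_pow ⟨r, rfl⟩
  calc (X ^ r * (1 - X) ^ N - C q : ℂ[X]) = (1 - X) ^ N * X ^ r - C q := by ring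
    _ = (-1) ^ r * ((-1) ^ N * ∏ i, (X - C (1 - H i))) * ((-1) ^ r * ∏ j, (X - C (Ht j))) := h2
    _ = ((-1) ^ r * (-1) ^ r) * ((-1) ^ N * (∏ j, (X - C (Ht j))) * ∏ i, (X - C (1 - H i))) := by
        ring
    _ = (-1) ^ N * (∏ j, (X - C (Ht j))) * ∏ i, (X - C (1 - H i)) := by rw [hs, one_mul]


/-- The identity `𝖬* = 𝖬̃*`: with `H_1, …, H_N, 1-H̃_1, …, 1-H̃_r` the roots (with
multiplicity) of `z^N (1-z)^r = q`, `q ≠ 0`, and both tuples pairwise distinct,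
`∏ᵢ (N/Hᵢ - r/(1-Hᵢ)) · ∏ᵢ Hᵢ^N · ∏ᵢ (1-Hᵢ)^{-r} · ∏_{i≠i'} (Hᵢ-Hᵢ')⁻¹`
equals the analogous expression with the roles of `(N, H)` and `(r, H̃)` exchanged. -/
theorem stmt4 (N r : ℕ) (hN : 1 ≤ N) (hr : 1 ≤ r) (q : ℂ) (hq : q ≠ 0)
    (H : Fin N → ℂ) (Ht : Fin r → ℂ)
    (hroots : (X ^ N * (1 - X) ^ r - C q : ℂ[X]) =
      (-1) ^ r * (∏ i, (X - C (H i))) * ∏ j, (X - C (1 - Ht j)))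
    (hHinj : Function.Injective H) (hHtinj : Function.Injective Ht) :
    (∏ i, ((N : ℂ) / H i - (r : ℂ) / (1 - H i))) * (∏ i, H i ^ N) *
        (∏ i, ((1 - H i) ^ r)⁻¹) *
        (∏ i, ∏ i' ∈ univ \ {i}, (H i - H i')⁻¹) =
      (∏ j, ((r : ℂ) / Ht j - (N : ℂ) / (1 - Ht j))) * (∏ j, Ht j ^ r) *
        (∏ j, ((1 - Ht j) ^ N)⁻¹) *
        (∏ j, ∏ j' ∈ univ \ {j}, (Ht j - Ht j')⁻¹) := by
  have hroots2 := hroots_swap N r q H Ht hroots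
  have K1 := key N r hN hr q hq H Ht hroots hHinj
  have K2 := key r N hr hN q hq Ht H hroots2 hHtinj
  have hvalt : ∀ j, Ht j ^ r * (1 - Ht j) ^ N = q := by
    intro j
    have h := congrArg (Polynomial.eval (Ht j)) hroots2
    simp only [eval_sub, eval_mul, eval_pow, eval_one, eval_X, eval_C, eval_prod,
      eval_neg] at h
    rw [Finset.prod_eq_zero (f := fun x => Ht j - Ht x) (mem_univ j) (sub_self _)] at h
    simp only [mul_zero, zero_mul] at h
    linear_combination h
  have hc : (∏ i, H i) * ∏ j, (1 - Ht j) = (-1) ^ (N + 1) * q := by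
    have h := congrArg (Polynomial.eval 0) hroots
    simp only [eval_sub, eval_mul, eval_pow, eval_one, eval_X, eval_C, eval_prod,
      eval_neg] at h
    rw [zero_pow (by omega : N ≠ 0)] at h
    rw [show (∏ i, ((0:ℂ) - H i)) = ∏ i, (-1) * H i from
      Finset.prod_congr rfl fun i _ => by ring] at h
    rw [show (∏ j, ((0:ℂ) - (1 - Ht j))) = ∏ j, (-1) * (1 - Ht j) from
      Finset.prod_congr rfl fun j _ => by ring] at h
    rw [Finset.prod_mul_distrib, Finset.prod_mul_distrib, Finset.prod_const,
      Finset.prod_const] at h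
    simp only [Finset.card_univ, Fintype.card_fin] at h
    have hs : ((-1:ℂ) ^ r) * (-1) ^ r = 1 := by
      rw [← pow_add]; exact Even.neg_one_pow ⟨r, rfl⟩
    have hs2 : ((-1:ℂ) ^ N) * (-1) ^ N = 1 := by
      rw [← pow_add]; exact Even.neg_one_pow ⟨N, rfl⟩
    have h' : -q = (-1:ℂ) ^ N * ((∏ i, H i) * ∏ j, (1 - Ht j)) := by
      rw [show ((0:ℂ) * (1 - 0) ^ r - q) = -q from by ring] at h
      calc -q = (-1:ℂ) ^ r * ((-1) ^ N * ∏ i, H i) * ((-1) ^ r * ∏ j, (1 - Ht j)) := h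
        _ = ((-1:ℂ) ^ r * (-1) ^ r) * ((-1) ^ N * ((∏ i, H i) * ∏ j, (1 - Ht j))) := by ring
        _ = (-1:ℂ) ^ N * ((∏ i, H i) * ∏ j, (1 - Ht j)) := by rw [hs, one_mul]
    linear_combination (-(-1:ℂ) ^ N) * h' - ((∏ i, H i) * ∏ j, (1 - Ht j)) * hs2
  have hA : (∏ i, H i ^ N) * (∏ j, (1 - Ht j) ^ N) = q ^ N := by
    have h := congrArg (· ^ N) hc
    rw [mul_pow, mul_pow] at h
    rw [Finset.prod_pow, Finset.prod_pow, h, ← pow_mul]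
    rw [Even.neg_one_pow (by rw [mul_comm]; exact Nat.even_mul_succ_self N :
      Even ((N + 1) * N)), one_mul]
  have hB : (∏ j, (1 - Ht j) ^ N) * (∏ j, Ht j ^ r) = q ^ r := by
    rw [← Finset.prod_mul_distrib]
    rw [show (∏ j, ((1 - Ht j) ^ N * Ht j ^ r)) = ∏ _j : Fin r, q from
      Finset.prod_congr rfl fun j _ => by rw [mul_comm]; exact hvalt j]
    simp
  have hST : (∏ i, H i ^ N) * q ^ r = (∏ j, Ht j ^ r) * q ^ N := by
    calc (∏ i, H i ^ N) * q ^ r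
        = (∏ i, H i ^ N) * ((∏ j, (1 - Ht j) ^ N) * ∏ j, Ht j ^ r) := by rw [hB]
      _ = ((∏ i, H i ^ N) * ∏ j, (1 - Ht j) ^ N) * ∏ j, Ht j ^ r := by ring
      _ = q ^ N * ∏ j, Ht j ^ r := by rw [hA]
      _ = (∏ j, Ht j ^ r) * q ^ N := by ring
  have hfin : (∏ i, H i ^ N) * (∏ i, H i ^ N) * ((q⁻¹) ^ N * (q⁻¹) ^ N)
      = (∏ j, Ht j ^ r) * (∏ j, Ht j ^ r) * ((q⁻¹) ^ r * (q⁻¹) ^ r) := by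
    rw [inv_pow, inv_pow]
    have hqN : (q : ℂ) ^ N ≠ 0 := pow_ne_zero _ hq
    have hqr : (q : ℂ) ^ r ≠ 0 := pow_ne_zero _ hq
    field_simp
    linear_combination ((∏ i, H i ^ N) * q ^ r + (∏ j, Ht j ^ r) * q ^ N) * hST
  have hP : (∏ j, ∏ i, (Ht j + H i - 1)) = ∏ i, ∏ j, (H i + Ht j - 1) := by
    rw [Finset.prod_comm]
    exact Finset.prod_congr rfl fun i _ => Finset.prod_congr rfl fun j _ => by ring
  rw [K1, K2]
  simp only [Finset.prod_mul_distrib, Finset.prod_const, Finset.card_univ, Fintype.card_fin]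
  rw [hP]
  rw [show (((-1:ℂ) ^ r) ^ N) = ((-1:ℂ) ^ N) ^ r from by
    rw [← pow_mul, ← pow_mul, mul_comm]]
  linear_combination (((-1:ℂ) ^ N) ^ r * ∏ i, ∏ j, (H i + Ht j - 1)) * hfin
end

section
/- With notation as in the context, let f′(z) = N z^{N−1}(1−z)^r − r z^N (1−z)^{r−1} be the derivative of f(z) = z^N(1−z)^r − q. Then ∏_{i=1}^N f′(H_i) = ∏_{i≠i'} (H_i − H_{i'}) · ∏_{i=1}^N ∏_{j=1}^r (1 − H_i − H̃_j), where the first product on the right runs over ordered pairs of distinct indices i, i' ∈ {1,…,N}. -/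
open Polynomial Finset

lemma eval_deriv_prod {n : ℕ} (H : Fin n → ℂ) (i : Fin n) :
    eval (H i) (derivative (∏ k, (X - C (H k)))) = ∏ k ∈ univ.erase i, (H i - H k) := by
  rw [← Finset.mul_prod_erase univ _ (mem_univ i), derivative_mul, derivative_X_sub_C, one_mul]
  simp [eval_prod]

/-- With `H_1, …, H_N, 1-H̃_1, …, 1-H̃_r` the roots (with multiplicity) of
`f(z) = z^N (1-z)^r - q = 0`, `q ≠ 0`, one has
`∏ᵢ f'(Hᵢ) = ∏_{i≠i'} (Hᵢ - Hᵢ') · ∏_{i,j} (1 - Hᵢ - H̃ⱼ)`. -/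
theorem stmt5 (N r : ℕ) (hN : 1 ≤ N) (hr : 1 ≤ r) (q : ℂ) (hq : q ≠ 0)
    (H : Fin N → ℂ) (Ht : Fin r → ℂ)
    (hroots : (X ^ N * (1 - X) ^ r - C q : ℂ[X]) =
      (-1) ^ r * (∏ i, (X - C (H i))) * ∏ j, (X - C (1 - Ht j))) :
    ∏ i, ((N : ℂ) * H i ^ (N - 1) * (1 - H i) ^ r -
        (r : ℂ) * H i ^ N * (1 - H i) ^ (r - 1)) =
      (∏ i, ∏ i' ∈ univ \ {i}, (H i - H i')) * ∏ i, ∏ j, (1 - H i - Ht j) := by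
  have key : ∀ i : Fin N,
      (N : ℂ) * H i ^ (N - 1) * (1 - H i) ^ r - (r : ℂ) * H i ^ N * (1 - H i) ^ (r - 1)
        = (∏ i' ∈ univ \ {i}, (H i - H i')) * ∏ j, (1 - H i - Ht j) := by
    intro i
    have he := congrArg (eval (H i)) (congrArg derivative hroots)
    have hL : eval (H i) (derivative (X ^ N * (1 - X) ^ r - C q : ℂ[X]))
        = (N : ℂ) * H i ^ (N - 1) * (1 - H i) ^ r - (r : ℂ) * H i ^ N * (1 - H i) ^ (r - 1) := by
      simp only [derivative_sub, derivative_C, sub_zero, derivative_mul, derivative_pow,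
        derivative_X, derivative_one, zero_sub, mul_one]
      simp [eval_mul, eval_pow, eval_sub]
      ring
    have hPi : eval (H i) (∏ k, (X - C (H k)) : ℂ[X]) = 0 := by
      rw [eval_prod]
      exact Finset.prod_eq_zero (mem_univ i) (by simp)
    have h2 : ∏ j, (H i - (1 - Ht j)) = (-1 : ℂ) ^ r * ∏ j, (1 - H i - Ht j) := by
      have : ∀ j : Fin r, (H i - (1 - Ht j)) = (-1) * (1 - H i - Ht j) := fun j => by ring
      rw [Finset.prod_congr rfl fun j _ => this j, Finset.prod_mul_distrib,
        Finset.prod_const, Finset.card_univ, Fintype.card_fin]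
    have hpow : ((-1 : ℂ) ^ r) * ((-1 : ℂ) ^ r) = 1 := by
      rw [← pow_add, ← two_mul, pow_mul]; norm_num
    have hR : eval (H i)
        (derivative ((-1) ^ r * (∏ k, (X - C (H k))) * ∏ j, (X - C (1 - Ht j)) : ℂ[X]))
        = (∏ i' ∈ univ \ {i}, (H i - H i')) * ∏ j, (1 - H i - Ht j) := by
      rw [mul_assoc, derivative_mul, derivative_mul]
      have h1 : derivative ((-1 : ℂ[X]) ^ r) = 0 := by
        rw [show ((-1 : ℂ[X]) ^ r) = C ((-1 : ℂ) ^ r) by simp, derivative_C]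
      rw [h1]
      simp only [zero_mul, zero_add, eval_mul, eval_add, eval_pow, eval_neg, eval_one, hPi,
        zero_mul, mul_zero, add_zero, eval_prod, eval_sub, eval_X, eval_C]
      rw [eval_deriv_prod, h2, Finset.sdiff_singleton_eq_erase]
      calc (-1:ℂ) ^ r * ((∏ k ∈ univ.erase i, (H i - H k)) * ((-1:ℂ) ^ r * ∏ j, (1 - H i - Ht j)))
          = ((-1:ℂ) ^ r * (-1:ℂ) ^ r) *
            ((∏ k ∈ univ.erase i, (H i - H k)) * ∏ j, (1 - H i - Ht j)) := by ring
        _ = (∏ k ∈ univ.erase i, (H i - H k)) * ∏ j, (1 - H i - Ht j) := by rw [hpow, one_mul]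
    rw [hL, hR] at he
    exact he
  rw [← Finset.prod_mul_distrib]
  exact Finset.prod_congr rfl fun i _ => key i
end

section
/- With notation as in the context (z_1,…,z_N the pairwise distinct roots of z^N − q(z−1)^N, with q ≠ 0, 1), one has N^N · ∏_{i=1}^N z_i^{N−1} · ∏_{i≠j} (1−z_j) = ∏_{i≠j} (z_i − z_j), where both products over i≠j run over ordered pairs of distinct indices in {1,…,N}. Equivalently, ∏_i z_i^N · ∏_{i≠j} (1−z_j)/(z_i−z_j) · ∏_i (N/z_i) = 1. -/
open Polynomial Finset

/-- With `z_1, …, z_N` the pairwise distinct roots of `z^N - q(z-1)^N` (`q ≠ 0, 1`),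
one has `N^N · ∏ᵢ zᵢ^{N-1} · ∏_{i≠j} (1-z_j) = ∏_{i≠j} (zᵢ - z_j)`. -/
theorem stmt6 (N : ℕ) (hN : 1 ≤ N) (q : ℂ) (hq0 : q ≠ 0) (hq1 : q ≠ 1)
    (z : Fin N → ℂ) (hinj : Function.Injective z)
    (hroots : (X ^ N - C q * (X - 1) ^ N : ℂ[X]) =
      C (1 - q) * ∏ i, (X - C (z i))) :
    (N : ℂ) ^ N * (∏ i, z i ^ (N - 1)) *
        (∏ i, ∏ j ∈ univ \ {i}, (1 - z j)) =
      ∏ i, ∏ j ∈ univ \ {i}, (z i - z j) := by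
  obtain ⟨M, rfl⟩ : ∃ M, N = M + 1 := ⟨N - 1, by omega⟩
  simp only [Nat.add_sub_cancel, Finset.sdiff_singleton_eq_erase]
  have hqne : (1 : ℂ) - q ≠ 0 := sub_ne_zero.mpr (Ne.symm hq1)
  -- evaluation at 1
  have h1 : (1 - q) * ∏ i, (1 - z i) = 1 := by
    have := congrArg (eval 1) hroots
    simp only [eval_sub, eval_pow, eval_X, eval_one, eval_mul, eval_C, eval_prod,
      sub_self, zero_pow (Nat.succ_ne_zero M), mul_zero, sub_zero, one_pow] at this
    exact this.symm
  have hPne : (∏ i, (1 - z i)) ≠ 0 := fun h => by simp [h] at h1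
  -- roots
  have hroot : ∀ i, (z i) ^ (M + 1) = q * (z i - 1) ^ (M + 1) := by
    intro i
    have h := congrArg (eval (z i)) hroots
    simp only [eval_sub, eval_pow, eval_X, eval_one, eval_mul, eval_C, eval_prod] at h
    have h0 : (∏ x : Fin (M + 1), (z i - z x)) = 0 :=
      Finset.prod_eq_zero (mem_univ i) (sub_self _)
    rw [h0, mul_zero, sub_eq_zero] at h
    exact h
  -- derivative of the product evaluated at a root
  have hevalD : ∀ i, eval (z i) (derivative (∏ j, (X - C (z j)))) =
      ∏ j ∈ univ.erase i, (z i - z j) := by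
    intro i
    rw [← Finset.mul_prod_erase univ _ (mem_univ i), derivative_mul]
    simp [eval_prod]
  -- derivative evaluation at roots
  have hD : ∀ i, ((M : ℂ) + 1) * z i ^ M - q * (((M : ℂ) + 1) * (z i - 1) ^ M) =
      (1 - q) * ∏ j ∈ univ.erase i, (z i - z j) := by
    intro i
    have h := congrArg (fun p => eval (z i) (derivative p)) hroots
    simp only [derivative_sub, derivative_mul, derivative_C, derivative_pow,
      derivative_X, derivative_one, sub_zero, mul_one, zero_mul, zero_add,
      eval_sub, eval_mul, eval_pow, eval_C, eval_X, eval_one,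
      Nat.add_sub_cancel, Nat.cast_add, Nat.cast_one] at h
    rw [hevalD i] at h
    exact h
  have hz : ∀ i, z i ≠ 1 := by
    intro i hi
    exact hPne (Finset.prod_eq_zero (mem_univ i) (by rw [hi, sub_self]))
  -- key pointwise identity
  have key : ∀ i, (1 - q) * (∏ j ∈ univ.erase i, (z i - z j)) * (1 - z i) =
      ((M : ℂ) + 1) * z i ^ M := by
    intro i
    have e1 : z i ^ M * z i = z i ^ (M + 1) := (pow_succ _ _).symm
    have e2 : (z i - 1) ^ M * (z i - 1) = (z i - 1) ^ (M + 1) := (pow_succ _ _).symm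
    linear_combination (1 - z i) * (hD i).symm - ((M : ℂ) + 1) * e1 +
      q * ((M : ℂ) + 1) * e2 - ((M : ℂ) + 1) * hroot i
  -- product of key
  have hprodkey : (1 - q) ^ (M + 1) * (∏ i, ∏ j ∈ univ.erase i, (z i - z j)) *
      ∏ i, (1 - z i) = ((M : ℂ) + 1) ^ (M + 1) * ∏ i, z i ^ M := by
    calc (1 - q) ^ (M + 1) * (∏ i, ∏ j ∈ univ.erase i, (z i - z j)) * ∏ i, (1 - z i)
        = ∏ i, ((1 - q) * (∏ j ∈ univ.erase i, (z i - z j)) * (1 - z i)) := by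
          rw [prod_mul_distrib, prod_mul_distrib, prod_const, card_univ, Fintype.card_fin]
      _ = ∏ i, (((M : ℂ) + 1) * z i ^ M) := prod_congr rfl fun i _ => key i
      _ = ((M : ℂ) + 1) ^ (M + 1) * ∏ i, z i ^ M := by
          rw [prod_mul_distrib, prod_const, card_univ, Fintype.card_fin]
  -- combine complements
  have hE : (∏ i, ∏ j ∈ univ.erase i, (1 - z j)) * ∏ i, (1 - z i) =
      (∏ j, (1 - z j)) ^ (M + 1) := by
    calc (∏ i, ∏ j ∈ univ.erase i, (1 - z j)) * ∏ i, (1 - z i)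
        = ∏ i, ((∏ j ∈ univ.erase i, (1 - z j)) * (1 - z i)) := prod_mul_distrib.symm
      _ = ∏ _i : Fin (M + 1), ∏ j, (1 - z j) :=
          prod_congr rfl fun i _ => Finset.prod_erase_mul univ _ (mem_univ i)
      _ = (∏ j, (1 - z j)) ^ (M + 1) := by
          rw [prod_const, card_univ, Fintype.card_fin]
  refine mul_right_cancel₀ (b := (∏ i, (1 - z i)) * (1 - q) ^ (M + 1))
    (mul_ne_zero hPne (pow_ne_zero (M + 1) hqne)) ?_
  have hcast : ((M + 1 : ℕ) : ℂ) = (M : ℂ) + 1 := by push_cast; ring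
  calc ((M + 1 : ℕ) : ℂ) ^ (M + 1) * (∏ i, z i ^ M) *
        (∏ i, ∏ j ∈ univ.erase i, (1 - z j)) * ((∏ i, (1 - z i)) * (1 - q) ^ (M + 1))
      = ((M : ℂ) + 1) ^ (M + 1) * (∏ i, z i ^ M) *
        (((∏ i, ∏ j ∈ univ.erase i, (1 - z j)) * ∏ i, (1 - z i)) * (1 - q) ^ (M + 1)) := by
        rw [hcast]; ring
    _ = ((M : ℂ) + 1) ^ (M + 1) * (∏ i, z i ^ M) *
        ((1 - q) * ∏ j, (1 - z j)) ^ (M + 1) := by rw [hE, mul_pow]; ring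
    _ = ((M : ℂ) + 1) ^ (M + 1) * (∏ i, z i ^ M) := by rw [h1, one_pow, mul_one]
    _ = (∏ i, ∏ j ∈ univ.erase i, (z i - z j)) * ((∏ i, (1 - z i)) * (1 - q) ^ (M + 1)) := by
        rw [← hprodkey]; ring
end

section
/- With notation as in the context (z_1,…,z_N the pairwise distinct roots of z^N − q(z−1)^N, with q ≠ 0, 1), for every index i ∈ {1,…,N} one has (1−q) · z_i · ∏_{i'≠i} (z_i − z_{i'})(z_{i'} − z_i) = −N² · q · z_i^{N−1} · (1−z_i)^{N−1} · ∏_{i'≠i} (1−z_{i'}). Equivalently, (z_i^{1−N}/N) · ∏_{i'≠i} [(z_i−z_{i'})(z_{i'}−z_i)] / [(1−z_i)(1−z_{i'})] = −Nq/((1−q)·z_i). -/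
open Polynomial Finset

/-- With `z_1, …, z_N` the pairwise distinct roots of `z^N - q(z-1)^N` (`q ≠ 0, 1`),
for every index `i` one has
`(1-q)·zᵢ·∏_{i'≠i} (zᵢ-zᵢ')(zᵢ'-zᵢ) = -N²·q·zᵢ^{N-1}·(1-zᵢ)^{N-1}·∏_{i'≠i} (1-zᵢ')`. -/
theorem stmt7 (N : ℕ) (hN : 1 ≤ N) (q : ℂ) (hq0 : q ≠ 0) (hq1 : q ≠ 1)
    (z : Fin N → ℂ) (hinj : Function.Injective z)
    (hroots : (X ^ N - C q * (X - 1) ^ N : ℂ[X]) =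
      C (1 - q) * ∏ i, (X - C (z i)))
    (i : Fin N) :
    (1 - q) * z i * ∏ i' ∈ univ \ {i}, ((z i - z i') * (z i' - z i)) =
      -(N : ℂ) ^ 2 * q * z i ^ (N - 1) * (1 - z i) ^ (N - 1) *
        ∏ i' ∈ univ \ {i}, (1 - z i') := by
  obtain ⟨M, rfl⟩ : ∃ M, N = M + 1 := ⟨N - 1, (Nat.succ_pred_eq_of_pos hN).symm⟩
  set w := z i with hw
  have hq : (1 : ℂ) - q ≠ 0 := sub_ne_zero.mpr (Ne.symm hq1)
  have hev : ∀ x : ℂ, x ^ (M+1) - q * (x - 1) ^ (M+1) = (1 - q) * ∏ j, (x - z j) := by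
    intro x
    have := congrArg (eval x) hroots
    simpa [eval_prod] using this
  have hone : (1 : ℂ) = (1 - q) * ∏ j, (1 - z j) := by simpa using hev 1
  have hroot : w ^ (M+1) = q * (w - 1) ^ (M+1) := by
    have h := hev w
    rw [Finset.prod_eq_zero (mem_univ i) (by rw [hw]; ring)] at h
    simpa [sub_eq_zero] using h
  have hw1 : w - 1 ≠ 0 := by
    intro h
    rw [sub_eq_zero.mp h] at hroot
    simp at hroot
  have hsdiff : (univ \ {i} : Finset (Fin (M+1))) = univ.erase i := by
    ext j; simp [Finset.mem_erase, eq_comm, and_comm]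
  set B := ∏ j ∈ univ.erase i, (1 - z j) with hBdef
  have hB : (1 - q) * ((1 - w) * B) = 1 := by
    rw [hBdef, show ((1 - w) * ∏ j ∈ univ.erase i, (1 - z j)) = ∏ j, (1 - z j) from
      Finset.mul_prod_erase univ (fun j => 1 - z j) (mem_univ i), ← hone]
  have hsplit : (X ^ (M+1) - C q * (X - 1) ^ (M+1) : ℂ[X]) =
      C (1 - q) * ((X - C w) * ∏ j ∈ univ.erase i, (X - C (z j))) := by
    rw [hroots]
    exact congrArg _ (Finset.mul_prod_erase univ (fun j => X - C (z j)) (mem_univ i)).symm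
  set A := ∏ j ∈ univ.erase i, (w - z j) with hAdef
  have hA : ((M : ℂ) + 1) * w ^ M - q * (((M : ℂ) + 1) * (w - 1) ^ M) = (1 - q) * A := by
    have h := congrArg (fun p => eval w (derivative p)) hsplit
    simp only [derivative_sub, derivative_mul, derivative_pow, derivative_X, derivative_C,
      derivative_one, derivative_X_pow, eval_sub, eval_mul, eval_pow, eval_add, eval_X,
      eval_C, eval_one, eval_natCast, eval_prod, zero_mul, mul_zero, zero_add, add_zero,
      mul_one, sub_zero, zero_sub, sub_self] at h
    push_cast at h
    linear_combination h
  have hcard : (univ.erase i).card = M := by simp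
  have hprod : ∏ i' ∈ univ \ {i}, ((w - z i') * (z i' - w)) = (-1 : ℂ) ^ M * A ^ 2 := by
    rw [hsdiff]
    calc ∏ j ∈ univ.erase i, ((w - z j) * (z j - w))
        = ∏ j ∈ univ.erase i, ((-1) * (w - z j) ^ 2) :=
          Finset.prod_congr rfl fun j _ => by ring
      _ = (∏ _j ∈ univ.erase i, (-1 : ℂ)) * ∏ j ∈ univ.erase i, (w - z j) ^ 2 :=
          Finset.prod_mul_distrib
      _ = (-1 : ℂ) ^ M * A ^ 2 := by
          rw [Finset.prod_const, hcard, Finset.prod_pow, hAdef]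
  have hc : (1 - q) * A * (w - 1) = -(((M : ℂ) + 1) * w ^ M) := by
    linear_combination (-(w - 1)) * hA + ((M : ℂ) + 1) * hroot
  have hP2 : ((1 - q) * A * (w - 1)) ^ 2 = ((M : ℂ) + 1) ^ 2 * (w ^ M) ^ 2 := by
    rw [hc]; ring
  have hq1' : q * (w - 1) ^ M * (w - 1) = w ^ M * w := by linear_combination -hroot
  rw [hprod, show (univ \ {i} : Finset (Fin (M+1))) = univ.erase i from hsdiff, ← hBdef]
  have hMsub : (M + 1) - 1 = M := rfl
  rw [hMsub]
  have hne : (1 - q) * (w - 1) ^ 2 ≠ 0 := mul_ne_zero hq (pow_ne_zero _ hw1)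
  apply mul_left_cancel₀ hne
  push_cast
  obtain hMe | hMo := Nat.even_or_odd M
  · rw [hMe.neg_one_pow, show ((1 : ℂ) - w) ^ M = (w - 1) ^ M from by
      rw [show (1 : ℂ) - w = -(w - 1) from by ring, hMe.neg_pow]]
    linear_combination w * hP2 + (((M : ℂ) + 1) ^ 2 * w ^ M * (w - 1) * (1 - q) * B) * hq1'
      - (((M : ℂ) + 1) ^ 2 * w ^ M * w ^ M * w) * hB
  · rw [hMo.neg_one_pow, show ((1 : ℂ) - w) ^ M = -(w - 1) ^ M from by
      rw [show (1 : ℂ) - w = -(w - 1) from by ring, hMo.neg_pow]]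
    linear_combination (-w) * hP2 - (((M : ℂ) + 1) ^ 2 * w ^ M * (w - 1) * (1 - q) * B) * hq1'
      + (((M : ℂ) + 1) ^ 2 * w ^ M * w ^ M * w) * hB
end

section
/- Let R be a commutative ring and g ∈ R[[x]] a formal power series with constant coefficient 1. Then there is a unique formal power series h ∈ R[[q]] with zero constant term satisfying h = q·g(h), and for every n ≥ 0 the coefficient of q^n in the formal derivative h′ of h equals the coefficient of x^n in g(x)^{n+1}. -/
open PowerSeries

/-- Substitution `g(h)` of a power series `h` with zero constant term into a power
series `g`: the coefficient of `q^m` is `∑_{n ≤ m} (coeff n g) · (coeff m (h^n))`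
(only finitely many terms contribute since `h` has zero constant term). -/
noncomputable def substPS {R : Type*} [CommRing R] (h g : PowerSeries R) : PowerSeries R :=
  PowerSeries.mk fun m =>
    ∑ n ∈ Finset.range (m + 1), PowerSeries.coeff n g * PowerSeries.coeff m (h ^ n)

namespace LagrangeAux

open Finset

variable {R : Type*} [CommRing R]

lemma coeff_substPS (h g : PowerSeries R) (m : ℕ) :
    coeff m (substPS h g) = ∑ n ∈ range (m + 1), coeff n g * coeff m (h ^ n) :=
  coeff_mk _ _

lemma coeff_pow_eq_zero {h : PowerSeries R} (h0 : constantCoeff h = 0)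
    {m n : ℕ} (hmn : m < n) : coeff m (h ^ n) = 0 := by
  obtain ⟨r, hr⟩ : (X : PowerSeries R) ∣ h := by
    rw [X_dvd_iff]; exact h0
  subst hr
  rw [mul_pow, coeff_X_pow_mul']
  simp [Nat.not_le_of_lt hmn, if_neg]

lemma coeff_pow_congr {a b : PowerSeries R} {d : ℕ}
    (hab : ∀ i ≤ d, coeff i a = coeff i b) (n : ℕ) :
    coeff d (a ^ n) = coeff d (b ^ n) := by
  induction n generalizing d with
  | zero => simp
  | succ n ih =>
    rw [pow_succ, pow_succ, coeff_mul, coeff_mul]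
    refine Finset.sum_congr rfl ?_
    rintro ⟨i, j⟩ hij
    rw [Finset.HasAntidiagonal.mem_antidiagonal] at hij
    have hi : i ≤ d := by omega
    have hj : j ≤ d := by omega
    rw [ih (fun k hk => hab k (le_trans hk hi)), hab j hj]

/-- Workhorse: coefficient of a product with a substitution. -/
lemma coeff_substPS_mul {h : PowerSeries R} (h0 : constantCoeff h = 0)
    (G Z : PowerSeries R) (n : ℕ) :
    coeff n (substPS h G * Z)
      = ∑ j ∈ range (n + 1), coeff j G * coeff n (h ^ j * Z) := by
  rw [coeff_mul]
  have step : ∀ p ∈ antidiagonal n,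
      coeff p.1 (substPS h G) * coeff p.2 Z
        = ∑ j ∈ range (n + 1), coeff j G * (coeff p.1 (h ^ j) * coeff p.2 Z) := by
    rintro ⟨a, b⟩ hab
    rw [Finset.HasAntidiagonal.mem_antidiagonal] at hab
    rw [coeff_substPS]
    rw [Finset.sum_subset (Finset.range_subset_range.2 (show a+1 ≤ n+1 by omega))
      (fun x hx hxa => by
        have : coeff a (h ^ x) = 0 := by
          apply coeff_pow_eq_zero h0
          simp only [mem_range] at hxa
          omega
        simp [this])]
    rw [Finset.sum_mul]
    refine Finset.sum_congr rfl fun j hj => by ring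
  rw [Finset.sum_congr rfl step, Finset.sum_comm]
  refine Finset.sum_congr rfl fun j _ => ?_
  rw [coeff_mul, Finset.mul_sum]

lemma sum_antidiag_square (m : ℕ) (F : ℕ → ℕ → R) (hF : ∀ i j, m < i + j → F i j = 0) :
    ∑ n ∈ range (m+1), ∑ p ∈ antidiagonal n, F p.1 p.2
      = ∑ i ∈ range (m+1), ∑ j ∈ range (m+1), F i j := by
  have hdisj : (↑(range (m+1)) : Set ℕ).PairwiseDisjoint (antidiagonal : ℕ → Finset (ℕ × ℕ)) := by
    intro a _ b _ hab
    simp only [Finset.disjoint_left, Finset.HasAntidiagonal.mem_antidiagonal]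
    intro p hp hq
    exact hab (hp ▸ hq ▸ rfl)
  rw [← Finset.sum_biUnion hdisj]
  rw [← Finset.sum_product' (s := range (m+1)) (t := range (m+1)) (f := fun i j => F i j)]
  apply Finset.sum_subset
  · intro p hp
    simp only [Finset.mem_biUnion, Finset.HasAntidiagonal.mem_antidiagonal, Finset.mem_range] at hp
    obtain ⟨n, hn, rfl⟩ := hp
    simp only [Finset.mem_product, Finset.mem_range]
    omega
  · intro p hp hnp
    simp only [Finset.mem_biUnion, Finset.HasAntidiagonal.mem_antidiagonal, Finset.mem_range] at hnp
    push_neg at hnp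
    apply hF
    by_contra hc
    push_neg at hc
    exact absurd rfl (hnp (p.1 + p.2) (by omega))

lemma substPS_one (h : PowerSeries R) : substPS h (1 : PowerSeries R) = 1 := by
  ext m
  rw [coeff_substPS]
  rw [Finset.sum_eq_single 0 (fun b _ hb => by simp [coeff_one, hb])
    (fun h' => absurd (Finset.mem_range.2 (Nat.succ_pos m)) h')]
  simp

lemma substPS_mul {h : PowerSeries R} (h0 : constantCoeff h = 0) (a b : PowerSeries R) :
    substPS h (a * b) = substPS h a * substPS h b := by
  ext m
  rw [coeff_substPS_mul h0, coeff_substPS]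
  have lhs : ∀ j ∈ range (m+1), coeff j (a*b) * coeff m (h ^ j)
      = ∑ p ∈ antidiagonal j, (coeff p.1 a * coeff p.2 b * coeff m (h ^ (p.1 + p.2))) := by
    intro j hj
    rw [coeff_mul, Finset.sum_mul]
    refine Finset.sum_congr rfl fun p hp => ?_
    rw [Finset.HasAntidiagonal.mem_antidiagonal] at hp
    rw [hp]
  rw [Finset.sum_congr rfl lhs,
    sum_antidiag_square m (fun i j => coeff i a * coeff j b * coeff m (h ^ (i+j)))
      (fun i j hij => by rw [coeff_pow_eq_zero h0 hij, mul_zero])]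
  refine Finset.sum_congr rfl fun i _ => ?_
  rw [show (h ^ i * substPS h b) = substPS h b * h ^ i by ring,
    coeff_substPS_mul h0 b (h ^ i) m]
  rw [Finset.mul_sum]
  refine Finset.sum_congr rfl fun j _ => ?_
  rw [pow_add]
  ring

lemma substPS_pow {h : PowerSeries R} (h0 : constantCoeff h = 0) (a : PowerSeries R) (k : ℕ) :
    substPS h (a ^ k) = (substPS h a) ^ k := by
  induction k with
  | zero => simpa using substPS_one h
  | succ k ih => rw [pow_succ, substPS_mul h0, ih, pow_succ]

/-- Fixed points of coefficient-contractions exist uniquely. -/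
lemma fix_exists_unique (T : PowerSeries R → PowerSeries R)
    (hT : ∀ d : ℕ, ∀ e₁ e₂ : PowerSeries R,
      (∀ i < d, coeff i e₁ = coeff i e₂) → coeff d (T e₁) = coeff d (T e₂)) :
    ∃! e : PowerSeries R, T e = e := by
  classical
  let E : ℕ → PowerSeries R := fun N => T^[N] 0
  have hE : ∀ N, ∀ i < N, coeff i (E N) = coeff i (E (N+1)) := by
    intro N
    induction N with
    | zero => intro i hi; omega
    | succ N ih =>
      intro i hi
      have h1 : E (N+1) = T (E N) := Function.iterate_succ_apply' T N 0
      have h2 : E (N+2) = T (E (N+1)) := Function.iterate_succ_apply' T (N+1) 0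
      rw [h1, h2]
      apply hT
      intro j hj
      exact ih j (by omega)
  have hEmono : ∀ {i N M : ℕ}, i < N → N ≤ M → coeff i (E N) = coeff i (E M) := by
    intro i N M hiN hNM
    induction M with
    | zero => omega
    | succ M ih =>
      rcases Nat.lt_or_ge N (M+1) with hlt | hge
      · rw [ih (by omega), hE M i (by omega)]
      · have : N = M+1 := by omega
        rw [this]
  set e : PowerSeries R := PowerSeries.mk (fun i => coeff i (E (i+1))) with he
  have hecoe : ∀ i N, i < N → coeff i e = coeff i (E N) := by
    intro i N hiN
    rw [he, coeff_mk]
    exact hEmono (Nat.lt_succ_self i) hiN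
  have hfix : T e = e := by
    ext i
    have h1 : coeff i (T e) = coeff i (T (E i)) := by
      apply hT
      intro j hj
      exact hecoe j i hj
    rw [h1, ← Function.iterate_succ_apply' T i 0]
    exact (hecoe i (i+1) (Nat.lt_succ_self i)).symm
  refine ⟨e, hfix, ?_⟩
  intro f hf
  ext d
  induction d using Nat.strong_induction_on with
  | _ d ih =>
    rw [← hf, ← hfix]
    exact hT d f e fun i hi => ih i hi

lemma coeff_derivativeFun' (f : PowerSeries R) (n : ℕ) :
    coeff n f.derivativeFun = coeff (n + 1) f * (n + 1) :=
  coeff_derivative f n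

lemma derivativeFun_X' : (X : PowerSeries R).derivativeFun = 1 := by
  ext n
  rw [coeff_derivativeFun', coeff_X]
  rcases n with _ | n <;> simp [coeff_one]

lemma derivativeFun_pow (g : PowerSeries R) (n : ℕ) :
    derivativeFun (g ^ (n+1)) = (n+1) • (g ^ n * derivativeFun g) := by
  induction n with
  | zero => simp
  | succ n ih =>
    rw [pow_succ, derivativeFun_mul, ih]
    simp only [smul_eq_mul, nsmul_eq_mul]
    push_cast
    ring

lemma key_smul {v g : PowerSeries R} (hvg : v * g = 1) (s : ℕ) :
    (s+1) • coeff (s+1) ((X*v).derivativeFun * g^(s+2)) = 0 := by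
  have hX : (X*v).derivativeFun = v + X * v.derivativeFun := by
    rw [derivativeFun_mul, derivativeFun_X']
    simp only [smul_eq_mul, mul_one]
    ring
  have hvg' : v.derivativeFun * g + v * g.derivativeFun = 0 := by
    have h := congrArg derivativeFun hvg
    rw [derivativeFun_mul, derivativeFun_one] at h
    simp only [smul_eq_mul] at h
    linear_combination h
  have hE : (X*v).derivativeFun * g^(s+2) = g^(s+1) - X * (g.derivativeFun * g^s) := by
    rw [hX]
    have h1 : v * g^(s+2) = g^(s+1) := by
      rw [show s+2 = 1 + (s+1) by omega, pow_add, pow_one, ← mul_assoc, hvg, one_mul]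
    have h2 : v.derivativeFun * g^(s+2) = -(g.derivativeFun * g^s) := by
      have h3 : v.derivativeFun * g = -(v * g.derivativeFun) := by linear_combination hvg'
      calc v.derivativeFun * g^(s+2) = (v.derivativeFun * g) * g^(s+1) := by
            rw [show s+2 = 1 + (s+1) by omega, pow_add, pow_one]; ring
        _ = -(v * g.derivativeFun * g^(s+1)) := by rw [h3]; ring
        _ = -(g.derivativeFun * (v * g^(s+1))) := by ring
        _ = -(g.derivativeFun * g^s) := by
            linear_combination (-(g.derivativeFun * (g^s))) * hvg
    calc (v + X * v.derivativeFun) * g^(s+2)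
        = v * g^(s+2) + X * (v.derivativeFun * g^(s+2)) := by ring
      _ = g^(s+1) - X * (g.derivativeFun * g^s) := by rw [h1, h2]; ring
  rw [hE, map_sub]
  rw [coeff_succ_X_mul]
  have h4 : (s+1) • coeff s (g.derivativeFun * g^s) = coeff (s+1) (g^(s+1)) * (s+1) := by
    have h5 := coeff_derivativeFun' (g^(s+1)) s
    rw [derivativeFun_pow g s, map_nsmul] at h5
    rw [mul_comm g.derivativeFun (g^s)]
    rw [← h5]
  rw [smul_sub, h4]
  rw [nsmul_eq_mul]
  push_cast
  ring

lemma derivativeFun_map {S : Type*} [CommRing S] (σ : R →+* S) (f : PowerSeries R) :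
    (PowerSeries.map σ f).derivativeFun = PowerSeries.map σ f.derivativeFun := by
  ext n
  rw [coeff_derivativeFun', coeff_map, coeff_map, coeff_derivativeFun', map_mul, map_add,
    map_natCast, map_one]

/-- The key residue computation, over an arbitrary commutative ring (by universal
transfer to `ℤ[b₁, b₂, …]`, where torsion-freeness applies). -/
lemma key {v g : PowerSeries R} (hvg : v * g = 1) (hv0 : constantCoeff v = 1) (s : ℕ) :
    coeff (s+1) ((X*v).derivativeFun * g^(s+2)) = 0 := by
  classical
  set R₀ := MvPolynomial ℕ ℤ
  set V : PowerSeries R₀ := PowerSeries.mk (fun i => if i = 0 then 1 else MvPolynomial.X i)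
    with hV
  have hV0 : constantCoeff V = 1 := by
    rw [← coeff_zero_eq_constantCoeff_apply, hV, coeff_mk, if_pos rfl]
  set W : PowerSeries R₀ := invOfUnit V 1 with hW
  have hVW : V * W = 1 := mul_invOfUnit V 1 (by rw [hV0]; rfl)
  have huniv : coeff (s+1) ((X*V).derivativeFun * W^(s+2)) = 0 := by
    have h1 := key_smul hVW s
    rw [nsmul_eq_mul] at h1
    have h2 : ((s+1 : ℕ) : R₀) ≠ 0 := by
      have : ((s+1 : ℕ) : R₀) = MvPolynomial.C ((s+1 : ℕ) : ℤ) := by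
        push_cast
        simp
      rw [this]
      intro hc
      have h3 := congrArg (MvPolynomial.eval (fun _ => (0:ℤ))) hc
      simp only [MvPolynomial.eval_C, map_zero] at h3
      omega
    exact (mul_eq_zero.mp h1).resolve_left h2
  set σ : R₀ →+* R := (MvPolynomial.eval₂Hom (Int.castRingHom R) (fun i => coeff i v))
    with hσ
  have hmapV : PowerSeries.map σ V = v := by
    ext i
    rw [coeff_map, hV, coeff_mk]
    rcases Nat.eq_zero_or_pos i with rfl | hi
    · rw [if_pos rfl, map_one, coeff_zero_eq_constantCoeff_apply, hv0]
    · rw [if_neg (by omega), hσ]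
      exact MvPolynomial.eval₂Hom_X' (Int.castRingHom R) (fun i => coeff i v) i
  have hmapW : v * PowerSeries.map σ W = 1 := by
    rw [← hmapV, ← map_mul, hVW, map_one]
  have hg : PowerSeries.map σ W = g := by
    calc PowerSeries.map σ W = (v * g) * PowerSeries.map σ W := by rw [hvg, one_mul]
      _ = (v * PowerSeries.map σ W) * g := by ring
      _ = g := by rw [hmapW, one_mul]
  have hm : PowerSeries.map σ ((X*V).derivativeFun * W^(s+2))
      = (X*v).derivativeFun * g^(s+2) := by
    rw [map_mul, map_pow, ← derivativeFun_map, map_mul, PowerSeries.map_X, hmapV, hg]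
  rw [← hm, coeff_map, huniv, map_zero]

end LagrangeAux

open LagrangeAux Finset in
/-- Lagrange–Bürmann: if `g` has constant coefficient `1`, there is a unique `h`
with zero constant term satisfying `h = q·g(h)`, and the coefficient of `q^n` in
the formal derivative `h'` equals the coefficient of `x^n` in `g(x)^{n+1}`. -/
theorem stmt8 (R : Type*) [CommRing R] (g : PowerSeries R)
    (hg : PowerSeries.constantCoeff g = 1) :
    (∃! h : PowerSeries R,
        PowerSeries.constantCoeff h = 0 ∧ h = PowerSeries.X * substPS h g) ∧
    ∀ h : PowerSeries R, PowerSeries.constantCoeff h = 0 →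
      h = PowerSeries.X * substPS h g →
      ∀ n : ℕ, PowerSeries.coeff n h.derivativeFun =
        PowerSeries.coeff n (g ^ (n + 1)) := by
  constructor
  · -- existence and uniqueness
    have hT : ∀ d : ℕ, ∀ e₁ e₂ : PowerSeries R,
        (∀ i < d, coeff i e₁ = coeff i e₂) →
        coeff d (X * substPS e₁ g) = coeff d (X * substPS e₂ g) := by
      intro d e₁ e₂ hagree
      rcases d with _ | m
      · simp [coeff_zero_eq_constantCoeff_apply, map_mul]
      · rw [coeff_succ_X_mul, coeff_succ_X_mul, coeff_substPS, coeff_substPS]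
        refine Finset.sum_congr rfl fun j _ => ?_
        rw [coeff_pow_congr (fun i hi => hagree i (by omega)) j]
    obtain ⟨e, hfix, huniq⟩ := fix_exists_unique (fun f => X * substPS f g) hT
    refine ⟨e, ⟨?_, hfix.symm⟩, ?_⟩
    · rw [← hfix]
      simp [map_mul]
    · rintro f ⟨hf0, hfeq⟩
      exact huniq f hfeq.symm
  · -- the coefficient formula
    intro h h0 heq n
    set u : PowerSeries R := substPS h g with hu
    have hXu : h = X * u := heq
    have hu0 : constantCoeff u = 1 := by
      rw [← coeff_zero_eq_constantCoeff_apply, hu, coeff_substPS]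
      simp [hg, coeff_zero_eq_constantCoeff_apply]
    set v : PowerSeries R := invOfUnit g 1 with hv
    have hgv : g * v = 1 := mul_invOfUnit g 1 (by rw [hg]; rfl)
    set w : PowerSeries R := substPS h v with hw
    have huw : u * w = 1 := by
      rw [hu, hw, ← substPS_mul h0, hgv, substPS_one]
    have hw0 : constantCoeff w = 1 := by
      have := congrArg constantCoeff huw
      rw [map_mul, hu0, one_mul, map_one] at this
      exact this
    -- coeff 0 of h' is 1
    have hd0 : coeff 0 h.derivativeFun = 1 := by
      rw [coeff_derivativeFun', hXu, coeff_succ_X_mul, coeff_zero_eq_constantCoeff_apply, hu0]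
      push_cast
      ring
    -- step A
    have stepA : coeff n h.derivativeFun
        = coeff n (substPS h (g^(n+1)) * (w^(n+1) * h.derivativeFun)) := by
      rw [substPS_pow h0, ← hu]
      rw [show u^(n+1) * (w^(n+1) * h.derivativeFun)
          = (u*w)^(n+1) * h.derivativeFun by rw [mul_pow]; ring]
      rw [huw, one_pow, one_mul]
    rw [stepA, coeff_substPS_mul h0]
    -- step C: each summand
    rw [Finset.sum_eq_single n ?_ ?_]
    · -- the j = n term
      have h1 : h ^ n * (w ^ (n + 1) * h.derivativeFun)
          = X^n * ((u^n * w^n) * (w * h.derivativeFun)) := by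
        rw [hXu, mul_pow, pow_succ]
        ring
      have h2 : coeff 0 (w * h.derivativeFun) = 1 := by
        rw [coeff_zero_eq_constantCoeff_apply, map_mul, hw0, one_mul,
          ← coeff_zero_eq_constantCoeff_apply, hd0]
      rw [h1, coeff_X_pow_mul', if_pos (le_refl n), Nat.sub_self, ← mul_pow, huw, one_pow,
        one_mul, h2, mul_one]
    · -- the j < n terms vanish
      intro j hj hjn
      rw [mem_range] at hj
      have hjle : j ≤ n := by omega
      have hsplit : h ^ j * (w ^ (n + 1) * h.derivativeFun)
          = X^j * ((u^j * w^j) * (w^((n-j)+1) * h.derivativeFun)) := by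
        rw [hXu, mul_pow]
        rw [show n + 1 = ((n-j)+1) + j by omega, pow_add w]
        ring
      rw [hsplit, coeff_X_pow_mul', if_pos hjle, ← mul_pow, huw, one_pow, one_mul]
      obtain ⟨s, hs⟩ : ∃ s, n - j = s + 1 := ⟨n - j - 1, by omega⟩
      rw [hs]
      have hkey := key (v := u) (g := w) huw hu0 s
      rw [← hXu] at hkey
      rw [show s+1+1 = s+2 from rfl, mul_comm (w^(s+2)) h.derivativeFun, hkey, mul_zero]
    · intro hn
      exact absurd (Finset.self_mem_range_succ n) hn
end

section
/- Let R be a commutative ring, g ∈ R[[x]] a formal power series with constant coefficient 1, and c ∈ R. Let h ∈ R[[q]] be the unique formal power series with zero constant term satisfying h = q·g(h), and let h′ be its formal derivative with respect to q. Write g_c(x) = g(c·x) (the rescaling of g, again with constant coefficient 1, hence invertible). Then for every n ≥ 0 the coefficient of q^n in (c·h·g_c(h)^{−1})·h′ equals the coefficient of x^n in c·x·g(x)^{n+1}·g_c(x)^{−1}. -/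
open PowerSeries

namespace Stmt9Aux

open Finset PowerSeries

variable {R : Type*} [CommRing R]

lemma coeff_derivativeFun' (f : PowerSeries R) (n : ℕ) :
    coeff n f.derivativeFun = coeff (n + 1) f * (n + 1) :=
  coeff_derivative f n

lemma coeff_substPS (h g : PowerSeries R) (m : ℕ) :
    coeff m (substPS h g) =
      ∑ k ∈ Finset.range (m + 1), coeff k g * coeff m (h ^ k) := by
  simp [substPS]

lemma coeff_pow_eq_zero {h : PowerSeries R} (hh0 : constantCoeff h = 0) :
    ∀ k m : ℕ, m < k → coeff m (h ^ k) = 0 := by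
  intro k
  induction k with
  | zero => intro m hm; omega
  | succ k ih =>
    intro m hm
    rw [pow_succ, coeff_mul]
    apply Finset.sum_eq_zero
    rintro ⟨i, j⟩ hp
    rw [Finset.HasAntidiagonal.mem_antidiagonal] at hp
    by_cases hik : i < k
    · rw [ih i hik, zero_mul]
    · have hj : j = 0 := by omega
      subst hj
      simp [PowerSeries.coeff_zero_eq_constantCoeff, hh0]

lemma coeff_substPS_ext {h : PowerSeries R} (hh0 : constantCoeff h = 0)
    (g : PowerSeries R) {m N : ℕ} (hmN : m < N) :
    coeff m (substPS h g) = ∑ k ∈ Finset.range N, coeff k g * coeff m (h ^ k) := by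
  rw [coeff_substPS]
  apply Finset.sum_subset (Finset.range_subset_range.2 (by omega))
  intro k hk hk'
  rw [Finset.mem_range, not_lt] at hk'
  rw [coeff_pow_eq_zero hh0 k m (by omega), mul_zero]

/-- The key linearity lemma. -/
lemma coeff_substPS_mul {h : PowerSeries R} (hh0 : constantCoeff h = 0)
    (g A : PowerSeries R) (n : ℕ) :
    coeff n (substPS h g * A) =
      ∑ k ∈ Finset.range (n + 1), coeff k g * coeff n (h ^ k * A) := by
  rw [coeff_mul]
  have h1 : ∀ p ∈ Finset.HasAntidiagonal.antidiagonal n,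
      coeff p.1 (substPS h g) * coeff p.2 A =
      ∑ k ∈ Finset.range (n + 1), coeff k g * (coeff p.1 (h ^ k) * coeff p.2 A) := by
    intro p hp
    rw [Finset.HasAntidiagonal.mem_antidiagonal] at hp
    rw [coeff_substPS_ext hh0 g (show p.1 < n + 1 by omega), Finset.sum_mul]
    exact Finset.sum_congr rfl fun k _ => by ring
  rw [Finset.sum_congr rfl h1, Finset.sum_comm]
  apply Finset.sum_congr rfl
  intro k _
  rw [coeff_mul, Finset.mul_sum]

lemma coeff_mul_as_sum (f B : PowerSeries R) (m : ℕ) :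
    coeff m (f * B) = ∑ k ∈ Finset.range (m + 1), coeff k f * coeff m (X ^ k * B) := by
  rw [coeff_mul, Finset.Nat.sum_antidiagonal_eq_sum_range_succ_mk]
  apply Finset.sum_congr rfl
  intro k hk
  rw [Finset.mem_range] at hk
  congr 1
  conv_rhs => rw [show m = (m - k) + k by omega, coeff_X_pow_mul]

lemma derivativeFun_pow (h : PowerSeries R) :
    ∀ k : ℕ, derivativeFun (h ^ (k + 1)) = (k + 1) • (h ^ k * derivativeFun h) := by
  intro k
  induction k with
  | zero => simp
  | succ k ih =>
    rw [pow_succ, derivativeFun_mul, ih]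
    simp only [smul_eq_mul, nsmul_eq_mul]
    push_cast
    ring

/-- The core Lagrange–Bürmann identity, over a characteristic-zero domain. -/
lemma core {R : Type*} [CommRing R] [IsDomain R] [CharZero R]
    (g h : PowerSeries R) (hh0 : constantCoeff h = 0)
    (hh : h = X * substPS h g) :
    ∀ n j : ℕ, coeff n (h ^ j * h.derivativeFun) = coeff n (X ^ j * g ^ (n + 1)) := by
  have hmul : ∀ A : PowerSeries R, h * A = X * (substPS h g * A) := by
    intro A; rw [← mul_assoc, ← hh]
  intro n
  induction n using Nat.strong_induction_on with
  | _ n IH =>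
    intro j
    match j with
    | (j + 1) =>
      rw [show h ^ (j + 1) * h.derivativeFun = h * (h ^ j * h.derivativeFun) by ring, hmul]
      match n with
      | 0 =>
        simp [PowerSeries.coeff_zero_eq_constantCoeff, map_mul, constantCoeff_X]
      | (m + 1) =>
        rw [coeff_succ_X_mul, coeff_substPS_mul hh0]
        rw [show X ^ (j + 1) * g ^ (m + 1 + 1) = X * (g * (X ^ j * g ^ (m + 1))) by ring,
          coeff_succ_X_mul, coeff_mul_as_sum]
        apply Finset.sum_congr rfl
        intro k _
        congr 1
        rw [show h ^ k * (h ^ j * h.derivativeFun) = h ^ (k + j) * h.derivativeFun by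
            rw [← mul_assoc, ← pow_add],
          IH m (by omega) (k + j),
          show X ^ k * (X ^ j * g ^ (m + 1)) = X ^ (k + j) * g ^ (m + 1) by
            rw [← mul_assoc, ← pow_add]]
    | 0 =>
      rw [pow_zero, pow_zero, one_mul, one_mul]
      match n with
      | 0 =>
        rw [coeff_derivativeFun']
        conv_lhs => rw [hh]
        rw [coeff_succ_X_mul, coeff_substPS]
        simp
      | (m + 1) =>
        -- cancellation by (m+1)
        have hcast : ((m + 1 : ℕ) : R) ≠ 0 := Nat.cast_ne_zero.mpr (Nat.succ_ne_zero m)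
        apply mul_left_cancel₀ hcast
        set S := substPS h g with hS
        -- f1 : coeff (m+1) h' = coeff (m+1) S * (m+2)
        have f1 : coeff (m + 1) h.derivativeFun = coeff (m + 1) S * ((m + 2 : ℕ) : R) := by
          rw [coeff_derivativeFun']
          conv_lhs => rw [hh]
          rw [coeff_succ_X_mul]
          push_cast
          ring
        -- claim2 : (m+1) * coeff (m+1) S = coeff m (g' * g^(m+1))
        have claim2 : ((m + 1 : ℕ) : R) * coeff (m + 1) S =
            coeff m (derivativeFun g * g ^ (m + 1)) := by
          rw [hS, coeff_substPS, Finset.mul_sum]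
          rw [coeff_mul_as_sum (derivativeFun g) (g ^ (m + 1)) m]
          rw [Finset.sum_range_succ' (fun k =>
            ((m + 1 : ℕ) : R) * (coeff k g * coeff (m + 1) (h ^ k)))]
          have hzero : ((m + 1 : ℕ) : R) * (coeff 0 g * coeff (m + 1) (h ^ 0)) = 0 := by
            rw [pow_zero, coeff_one, if_neg (Nat.succ_ne_zero m)]
            ring
          rw [hzero, add_zero]
          apply Finset.sum_congr rfl
          intro t ht
          rw [Finset.mem_range] at ht
          have hder : coeff m (derivativeFun (h ^ (t + 1))) =
              ((t + 1 : ℕ) : R) * coeff m (h ^ t * h.derivativeFun) := by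
            rw [derivativeFun_pow h t, map_nsmul, nsmul_eq_mul]
          have hder2 : coeff m (derivativeFun (h ^ (t + 1))) =
              coeff (m + 1) (h ^ (t + 1)) * ((m + 1 : ℕ) : R) := by
            rw [coeff_derivativeFun']; push_cast; ring
          have hIH := IH m (by omega) t
          rw [coeff_derivativeFun']
          -- goal: (m+1) * (coeff (t+1) g * coeff (m+1) (h^(t+1)))
          --     = coeff (t+1) g * (t+1) * coeff m (X^t * g^(m+1))
          have : ((m + 1 : ℕ) : R) * coeff (m + 1) (h ^ (t + 1)) =
              ((t + 1 : ℕ) : R) * coeff m (X ^ t * g ^ (m + 1)) := by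
            push_cast at hder hder2 ⊢
            linear_combination hder - hder2 + ((t : R) + 1) * hIH
          push_cast at this ⊢
          linear_combination (coeff (t + 1) g) * this
        -- claim3 : (m+1) * coeff (m+1) (g^(m+2)) = (m+2) * coeff m (g' * g^(m+1))
        have claim3 : ((m + 1 : ℕ) : R) * coeff (m + 1) (g ^ (m + 2)) =
            ((m + 2 : ℕ) : R) * coeff m (derivativeFun g * g ^ (m + 1)) := by
          have h1 : coeff m (derivativeFun (g ^ (m + 2))) =
              coeff (m + 1) (g ^ (m + 2)) * ((m + 1 : ℕ) : R) := by
            rw [coeff_derivativeFun']; push_cast; ring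
          have h2 : derivativeFun (g ^ (m + 2)) = (m + 2) • (g ^ (m + 1) * derivativeFun g) :=
            derivativeFun_pow g (m + 1)
          rw [h2, map_nsmul, nsmul_eq_mul,
            show g ^ (m + 1) * derivativeFun g = derivativeFun g * g ^ (m + 1) from
              mul_comm _ _] at h1
          push_cast at h1 ⊢
          linear_combination -h1
        have goal2 : ((m + 1 : ℕ) : R) * coeff (m + 1) h.derivativeFun =
            ((m + 1 : ℕ) : R) * coeff (m + 1) (g ^ (m + 1 + 1)) := by
          push_cast at f1 claim2 claim3 ⊢
          linear_combination ((m : R) + 1) * f1 + ((m : R) + 2) * claim2 - claim3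
        exact goal2

section Agree

lemma agree_pow {a b : PowerSeries R} {d : ℕ}
    (hab : ∀ i ≤ d, coeff i a = coeff i b) (k : ℕ) :
    ∀ i ≤ d, coeff i (a ^ k) = coeff i (b ^ k) := by
  induction k with
  | zero => intro i _; rfl
  | succ k ih =>
    intro i hi
    rw [pow_succ, pow_succ, coeff_mul, coeff_mul]
    apply Finset.sum_congr rfl
    rintro ⟨p, q⟩ hp
    rw [Finset.HasAntidiagonal.mem_antidiagonal] at hp
    rw [ih p (by omega), hab q (by omega)]

lemma agree_subst {a b : PowerSeries R} {d : ℕ}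
    (hab : ∀ i ≤ d, coeff i a = coeff i b) (g : PowerSeries R) :
    ∀ i ≤ d, coeff i (substPS a g) = coeff i (substPS b g) := by
  intro i hi
  rw [coeff_substPS, coeff_substPS]
  exact Finset.sum_congr rfl fun k _ => by rw [agree_pow hab k i hi]

lemma coeff_zero_X_mul (f : PowerSeries R) : coeff 0 (X * f) = 0 := by
  simp [PowerSeries.coeff_zero_eq_constantCoeff, map_mul, constantCoeff_X]

/-- Uniqueness of the solution of `h = X * g(h)`. -/
lemma uniq {g h₁ h₂ : PowerSeries R}
    (e₁ : h₁ = X * substPS h₁ g) (e₂ : h₂ = X * substPS h₂ g) : h₁ = h₂ := by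
  ext m
  induction m using Nat.strong_induction_on with
  | _ m IH =>
    match m with
    | 0 => rw [e₁, e₂, coeff_zero_X_mul, coeff_zero_X_mul]
    | (m + 1) =>
      conv_lhs => rw [e₁]
      conv_rhs => rw [e₂]
      rw [coeff_succ_X_mul, coeff_succ_X_mul]
      exact agree_subst (fun i hi => IH i (by omega)) g m le_rfl

/-- Iterates approximating the solution of `h = X * g(h)`. -/
noncomputable def iter (g : PowerSeries R) : ℕ → PowerSeries R
  | 0 => 0
  | (i + 1) => X * substPS (iter g i) g

lemma coeff_zero_iter (g : PowerSeries R) (e : ℕ) : coeff 0 (iter g e) = 0 := by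
  match e with
  | 0 => simp [iter]
  | (e + 1) => rw [iter, coeff_zero_X_mul]

lemma iter_agree (g : PowerSeries R) :
    ∀ d e, d ≤ e → ∀ i ≤ d, coeff i (iter g d) = coeff i (iter g e) := by
  intro d
  induction d with
  | zero =>
    intro e _ i hi
    interval_cases i
    rw [coeff_zero_iter, coeff_zero_iter]
  | succ d ih =>
    intro e he i hi
    match e with
    | (e + 1) =>
      rw [iter, iter]
      match i with
      | 0 => rw [coeff_zero_X_mul, coeff_zero_X_mul]
      | (i + 1) =>
        rw [coeff_succ_X_mul, coeff_succ_X_mul]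
        exact agree_subst (fun t ht => ih e (by omega) t ht) g i (by omega)

/-- Existence of the solution of `h = X * g(h)`. -/
lemma exists_h (g : PowerSeries R) :
    ∃ h : PowerSeries R, constantCoeff h = 0 ∧ h = X * substPS h g := by
  set H : PowerSeries R := PowerSeries.mk (fun m => coeff m (iter g m)) with hH
  have hcoeff : ∀ m, coeff m H = coeff m (iter g m) := fun m => by
    rw [hH, coeff_mk]
  have hagree : ∀ m, ∀ i ≤ m, coeff i H = coeff i (iter g m) := by
    intro m i hi
    rw [hcoeff i, iter_agree g i m hi i le_rfl]
  refine ⟨H, ?_, ?_⟩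
  · rw [← PowerSeries.coeff_zero_eq_constantCoeff_apply, hcoeff 0, coeff_zero_iter]
  · ext m
    match m with
    | 0 => rw [hcoeff 0, coeff_zero_iter, coeff_zero_X_mul]
    | (m + 1) =>
      rw [coeff_succ_X_mul, hcoeff (m + 1), iter, coeff_succ_X_mul]
      exact (agree_subst (fun i hi => hagree m i hi) g m le_rfl).symm

end Agree

section Map

variable {S : Type*} [CommRing S]

lemma map_substPS (φ : R →+* S) (h f : PowerSeries R) :
    PowerSeries.map φ (substPS h f) = substPS (PowerSeries.map φ h) (PowerSeries.map φ f) := by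
  ext m
  rw [PowerSeries.coeff_map, coeff_substPS, coeff_substPS, map_sum]
  apply Finset.sum_congr rfl
  intro k _
  rw [map_mul, PowerSeries.coeff_map, ← map_pow, PowerSeries.coeff_map]

lemma map_derivativeFun (φ : R →+* S) (h : PowerSeries R) :
    PowerSeries.map φ (derivativeFun h) = derivativeFun (PowerSeries.map φ h) := by
  ext n
  rw [PowerSeries.coeff_map, coeff_derivativeFun', coeff_derivativeFun', PowerSeries.coeff_map,
    map_mul, map_add, map_natCast, map_one]

end Map

/-- The Lagrange–Bürmann identity over an arbitrary commutative ring, by transfer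
from the universal ring `MvPolynomial ℕ ℤ`. -/
lemma star {R : Type*} [CommRing R] (g h : PowerSeries R)
    (hh0 : constantCoeff h = 0) (hh : h = X * substPS h g) (n j : ℕ) :
    coeff n (h ^ j * h.derivativeFun) = coeff n (X ^ j * g ^ (n + 1)) := by
  haveI : CharZero (MvPolynomial ℕ ℤ) := by
    constructor
    intro a b hab
    have := congrArg (MvPolynomial.eval (fun _ => (0 : ℤ))) hab
    rwa [map_natCast, map_natCast, Nat.cast_injective.eq_iff] at this
  set φ : MvPolynomial ℕ ℤ →+* R :=
    MvPolynomial.eval₂Hom (Int.castRingHom R) (fun k => coeff k g) with hφ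
  set G : PowerSeries (MvPolynomial ℕ ℤ) := PowerSeries.mk (fun k => MvPolynomial.X k) with hG
  obtain ⟨H, H0, HE⟩ := exists_h G
  have hmapG : PowerSeries.map φ G = g := by
    ext k
    rw [PowerSeries.coeff_map, hG, coeff_mk, hφ, MvPolynomial.eval₂Hom_X']
  have hmapHE : PowerSeries.map φ H = X * substPS (PowerSeries.map φ H) g := by
    conv_lhs => rw [HE]
    rw [map_mul, PowerSeries.map_X, map_substPS, hmapG]
  have hmapH : PowerSeries.map φ H = h := uniq hmapHE hh
  have hcore := core G H H0 HE n j
  have hser1 : PowerSeries.map φ (H ^ j * H.derivativeFun) = h ^ j * h.derivativeFun := by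
    rw [map_mul, map_pow, map_derivativeFun, hmapH]
  have hser2 : PowerSeries.map φ (X ^ j * G ^ (n + 1)) = X ^ j * g ^ (n + 1) := by
    rw [map_mul, map_pow, map_pow, PowerSeries.map_X, hmapG]
  calc coeff n (h ^ j * h.derivativeFun)
      = coeff n (PowerSeries.map φ (H ^ j * H.derivativeFun)) := by rw [hser1]
    _ = φ (coeff n (H ^ j * H.derivativeFun)) := by
        rw [PowerSeries.coeff_map]
    _ = φ (coeff n (X ^ j * G ^ (n + 1))) := by rw [hcore]
    _ = coeff n (PowerSeries.map φ (X ^ j * G ^ (n + 1))) := by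
        rw [PowerSeries.coeff_map]
    _ = coeff n (X ^ j * g ^ (n + 1)) := by rw [hser2]

end Stmt9Aux

/-- Lagrange–Bürmann with a rescaled twist: if `g` has constant coefficient `1`,
`h` is the unique series with zero constant term satisfying `h = q·g(h)`, and
`g_c(x) = g(c·x)` (with inverse `g_c⁻¹ = invOfUnit g_c 1`), then the coefficient
of `q^n` in `(c·h·g_c(h)⁻¹)·h'` equals the coefficient of `x^n` in
`c·x·g(x)^{n+1}·g_c(x)⁻¹`. -/
theorem stmt9 (R : Type*) [CommRing R] (g : PowerSeries R)
    (hg : PowerSeries.constantCoeff g = 1) (c : R)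
    (h : PowerSeries R) (hh0 : PowerSeries.constantCoeff h = 0)
    (hh : h = PowerSeries.X * substPS h g) :
    ∀ n : ℕ,
      PowerSeries.coeff n
        ((PowerSeries.C c * h *
            substPS h (PowerSeries.invOfUnit (PowerSeries.rescale c g) 1)) *
          h.derivativeFun) =
      PowerSeries.coeff n
        (PowerSeries.C c * PowerSeries.X * g ^ (n + 1) *
          PowerSeries.invOfUnit (PowerSeries.rescale c g) 1) := by
  intro n
  set G := PowerSeries.invOfUnit (PowerSeries.rescale c g) 1 with hGdef
  have l1 : (PowerSeries.C c * h * substPS h G) * h.derivativeFun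
      = PowerSeries.C c * (substPS h G * (h * h.derivativeFun)) := by ring
  have r1 : PowerSeries.C c * PowerSeries.X * g ^ (n + 1) * G
      = PowerSeries.C c * (G * (PowerSeries.X * g ^ (n + 1))) := by ring
  rw [l1, r1, PowerSeries.coeff_C_mul, PowerSeries.coeff_C_mul,
    Stmt9Aux.coeff_substPS_mul hh0 G (h * h.derivativeFun) n,
    Stmt9Aux.coeff_mul_as_sum G (PowerSeries.X * g ^ (n + 1)) n]
  congr 1
  apply Finset.sum_congr rfl
  intro k _
  congr 1
  rw [show h ^ k * (h * h.derivativeFun) = h ^ (k + 1) * h.derivativeFun by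
      rw [← mul_assoc, ← pow_succ],
    Stmt9Aux.star g h hh0 hh n (k + 1),
    show PowerSeries.X ^ k * (PowerSeries.X * g ^ (n + 1))
        = PowerSeries.X ^ (k + 1) * g ^ (n + 1) by
      rw [← mul_assoc, ← pow_succ]]
end

section
/- Let R be a commutative ring and y ∈ R. There is a unique formal power series H ∈ R[[q]] with zero constant term satisfying H = −q·(1 + y·H²). Since 1 + y·H² has constant coefficient 1 it is invertible in R[[q]]; set A = (1 − y·H²)·(1 + y·H²)^{−2}. Then (2A − 1 + 4y·q²)² = 1 − 4y·q² as an identity in R[[q]]. -/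
open PowerSeries

private lemma alg_aux {S : Type*} [CommRing S] (u v w : S) (h1 : u * v = 1)
    (h2 : w * u ^ 2 = u - 1) :
    (2 * ((2 - u) * v ^ 2) - 1 + 4 * w) ^ 2 = 1 - 4 * w := by
  have hu : IsUnit (u ^ 4) := (IsUnit.of_mul_eq_one (a := u) v h1).pow 4
  refine hu.mul_left_cancel ?_
  linear_combination
    (2 * (2 - u) * (u * v + 1) *
        ((u ^ 2 * (2 * (2 - u) * v ^ 2 - 1 + 4 * w)) + 2 * u - u ^ 2)) * h1 +
      (4 * ((u ^ 2 * (2 * (2 - u) * v ^ 2 - 1 + 4 * w)) + 2 * u - u ^ 2) + 4 * u ^ 2) * h2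

private def hcoef {R : Type*} [CommRing R] (y : R) : ℕ → R
  | 0 => 0
  | 1 => -1
  | (n + 2) => -y * ∑ i ∈ (Finset.range (n + 2)).attach, hcoef y i.1 * hcoef y (n + 1 - i.1)
  decreasing_by
  · have := i.2; simp only [Finset.mem_range] at this; omega
  · have := i.2; simp only [Finset.mem_range] at this; omega

private lemma coeff_rec {R : Type*} [CommRing R] (y : R) (H : PowerSeries R)
    (hH : H = -(PowerSeries.X * (1 + PowerSeries.C y * H ^ 2))) (n : ℕ) :
    PowerSeries.coeff (n + 1) H =
      -((if n = 0 then (1 : R) else 0) +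
        y * ∑ i ∈ Finset.range (n + 1),
          PowerSeries.coeff i H * PowerSeries.coeff (n - i) H) := by
  conv_lhs => rw [hH]
  rw [map_neg, coeff_succ_X_mul, map_add, coeff_one, coeff_C_mul, pow_two, coeff_mul,
    Finset.Nat.sum_antidiagonal_eq_sum_range_succ_mk]

/-- There is a unique `H ∈ R[[q]]` with zero constant term satisfying
`H = -q·(1+y·H²)`; moreover, with `A = (1-y·H²)·(1+y·H²)^{-2}` one has
`(2A - 1 + 4y·q²)² = 1 - 4y·q²` in `R[[q]]`. -/
theorem stmt10 (R : Type*) [CommRing R] (y : R) :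
    (∃! H : PowerSeries R,
        PowerSeries.constantCoeff H = 0 ∧
          H = -(PowerSeries.X * (1 + PowerSeries.C y * H ^ 2))) ∧
    ∀ H : PowerSeries R, PowerSeries.constantCoeff H = 0 →
      H = -(PowerSeries.X * (1 + PowerSeries.C y * H ^ 2)) →
      (2 * ((1 - PowerSeries.C y * H ^ 2) *
            (PowerSeries.invOfUnit (1 + PowerSeries.C y * H ^ 2) 1) ^ 2) -
          1 + 4 * PowerSeries.C y * PowerSeries.X ^ 2) ^ 2 =
        1 - 4 * PowerSeries.C y * PowerSeries.X ^ 2 := by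
  constructor
  · -- existence and uniqueness
    set H0 : PowerSeries R := PowerSeries.mk (hcoef y) with hH0
    have hc0 : PowerSeries.constantCoeff H0 = 0 := by
      rw [hH0, ← coeff_zero_eq_constantCoeff, coeff_mk, hcoef]
    have heq : H0 = -(PowerSeries.X * (1 + PowerSeries.C y * H0 ^ 2)) := by
      ext n
      cases n with
      | zero =>
        rw [coeff_zero_eq_constantCoeff, hc0]
        simp
      | succ m =>
        rw [map_neg, coeff_succ_X_mul, map_add, coeff_one, coeff_C_mul, pow_two, coeff_mul,
          Finset.Nat.sum_antidiagonal_eq_sum_range_succ_mk, hH0, coeff_mk]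
        cases m with
        | zero => simp [hcoef]
        | succ k =>
          rw [hcoef]
          rw [Finset.sum_attach (Finset.range (k + 2))
            (fun i => hcoef y i * hcoef y (k + 1 - i))]
          simp only [coeff_mk, Nat.succ_ne_zero, if_false, zero_add, neg_mul,
            Nat.succ_eq_add_one]
    refine ⟨H0, ⟨hc0, heq⟩, ?_⟩
    rintro H ⟨hc, hH⟩
    ext n
    induction n using Nat.strong_induction_on with
    | _ n ih =>
      cases n with
      | zero => rw [coeff_zero_eq_constantCoeff, hc, hc0]
      | succ m =>
        rw [coeff_rec y H hH m, coeff_rec y H0 heq m]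
        have hsum : ∑ i ∈ Finset.range (m + 1),
            PowerSeries.coeff i H * PowerSeries.coeff (m - i) H =
            ∑ i ∈ Finset.range (m + 1),
            PowerSeries.coeff i H0 * PowerSeries.coeff (m - i) H0 :=
          Finset.sum_congr rfl fun i hi => by
            rw [Finset.mem_range] at hi
            rw [ih i (by omega), ih (m - i) (by omega)]
        rw [hsum]
  · -- the algebraic identity
    intro H hc hH
    have hu1 : PowerSeries.constantCoeff (1 + PowerSeries.C y * H ^ 2) = 1 := by
      simp [map_add, map_mul, map_pow, hc]
    have huv : (1 + PowerSeries.C y * H ^ 2) *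
        PowerSeries.invOfUnit (1 + PowerSeries.C y * H ^ 2) 1 = 1 :=
      PowerSeries.mul_invOfUnit _ 1 (by simpa using hu1)
    have hsq : H ^ 2 = PowerSeries.X ^ 2 * (1 + PowerSeries.C y * H ^ 2) ^ 2 := by
      conv_lhs => rw [hH]
      ring
    have h2 : (PowerSeries.C y * PowerSeries.X ^ 2) *
        (1 + PowerSeries.C y * H ^ 2) ^ 2 = (1 + PowerSeries.C y * H ^ 2) - 1 := by
      linear_combination (-(PowerSeries.C y)) * hsq
    linear_combination alg_aux (1 + PowerSeries.C y * H ^ 2)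
      (PowerSeries.invOfUnit (1 + PowerSeries.C y * H ^ 2) 1)
      (PowerSeries.C y * PowerSeries.X ^ 2) huv h2
end

section
/- Let H ∈ ℚ[[q]] be the unique formal power series with zero constant term satisfying H = −q·(1 + H²), and set A = (1 − H²)·(1 + H²)^{−2} ∈ ℚ[[q]]. Then A is not a rational function of q: there do not exist polynomials p, s ∈ ℚ[X] with s ≠ 0 such that s(q)·A = p(q) holds in ℚ[[q]] (polynomials being regarded as power series in the evident way). -/
open PowerSeries

/-- For the unique `H ∈ ℚ[[q]]` with zero constant term satisfying
`H = -q·(1+H²)`, the series `A = (1-H²)·(1+H²)^{-2}` is not a rational function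
of `q`: there are no polynomials `p, s` with `s ≠ 0` and `s(q)·A = p(q)`. -/
theorem stmt11 (H : PowerSeries ℚ)
    (hH0 : PowerSeries.constantCoeff H = 0)
    (hH : H = -(PowerSeries.X * (1 + H ^ 2))) :
    ¬ ∃ (p s : Polynomial ℚ), s ≠ 0 ∧
      (s : PowerSeries ℚ) * ((1 - H ^ 2) * ((1 + H ^ 2) ^ 2)⁻¹) =
        (p : PowerSeries ℚ) := by
  rintro ⟨p, s, hs, hA⟩
  set U : PowerSeries ℚ := 1 + H ^ 2 with hUdef
  set V : PowerSeries ℚ := (U ^ 2)⁻¹ with hVdef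
  set A : PowerSeries ℚ := (1 - H ^ 2) * V with hAdef
  have hcU : constantCoeff U = 1 := by
    simp [hUdef, map_add, map_pow, hH0]
  have hcU2 : constantCoeff (U ^ 2) ≠ 0 := by
    rw [map_pow, hcU]; norm_num
  have hV : U ^ 2 * V = 1 := PowerSeries.mul_inv_cancel _ hcU2
  -- `H² = X²·U²`, and `U - 1 = H²`
  have hH2 : H ^ 2 = PowerSeries.X ^ 2 * U ^ 2 := by rw [hH]; ring
  have hX2 : PowerSeries.X ^ 2 * U ^ 2 = U - 1 := by
    rw [← hH2, hUdef]; ring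
  set D : PowerSeries ℚ := 1 - 4 * PowerSeries.X ^ 2 with hDdef
  have hDU : D * U ^ 2 = (2 - U) ^ 2 := by
    rw [hDdef]; linear_combination (-4 : PowerSeries ℚ) * hX2
  have hA' : A = (2 - U) * V := by
    rw [hAdef]
    have h1 : (1 : PowerSeries ℚ) - H ^ 2 = 2 - U := by
      rw [hH2]; linear_combination -hX2
    rw [h1]
  have hD' : D = (2 - U) ^ 2 * V := by
    linear_combination (-D) * hV + V * hDU
  have hB2 : (2 * A - D) ^ 2 = D := by
    rw [hA', hD']
    linear_combination ((2 - U) ^ 2 * V) * hV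
  -- polynomial side
  set Dp : Polynomial ℚ := 1 - 4 * Polynomial.X ^ 2 with hDpdef
  have hDpco : ((Dp : Polynomial ℚ) : PowerSeries ℚ) = D := by
    rw [hDpdef, hDdef]
    push_cast
    rw [← map_ofNat Polynomial.C 4, Polynomial.coe_C, map_ofNat]
  have h2co : ((2 : Polynomial ℚ) : PowerSeries ℚ) = 2 := by
    rw [← map_ofNat Polynomial.C 2, Polynomial.coe_C, map_ofNat]
  set r : Polynomial ℚ := 2 * p - Dp * s with hrdef
  have hrco : ((r : Polynomial ℚ) : PowerSeries ℚ) = (s : PowerSeries ℚ) * (2 * A - D) := by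
    rw [hrdef]
    push_cast [Polynomial.coe_sub, Polynomial.coe_mul, hDpco, h2co]
    rw [← hA]
    ring
  have hpoly : r ^ 2 = Dp * s ^ 2 := by
    rw [← Polynomial.coe_inj]
    push_cast [Polynomial.coe_mul, Polynomial.coe_pow]
    rw [hrco, hDpco]
    calc ((s : PowerSeries ℚ) * (2 * A - D)) ^ 2
        = (2 * A - D) ^ 2 * (s : PowerSeries ℚ) ^ 2 := by ring
      _ = D * (s : PowerSeries ℚ) ^ 2 := by rw [hB2]
  -- `Dp ≠ 0`
  have hDp0 : Dp ≠ 0 := by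
    intro h
    have := congrArg (Polynomial.eval 0) h
    simp [hDpdef] at this
  have hr0 : r ≠ 0 := by
    intro h
    rw [h] at hpoly
    have : Dp * s ^ 2 = 0 := by rw [← hpoly]; ring
    rcases mul_eq_zero.mp this with h1 | h1
    · exact hDp0 h1
    · exact hs (sq_eq_zero_iff.mp h1)
  -- root multiplicities at `1/2`
  have hfac : Dp = Polynomial.C (-4 : ℚ) * ((Polynomial.X - Polynomial.C (1/2 : ℚ)) *
      (Polynomial.X + Polynomial.C (1/2 : ℚ))) := by
    rw [hDpdef, show Polynomial.C (-4:ℚ) = -4 by rw [map_neg, map_ofNat]]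
    ring_nf
    rw [← Polynomial.C_pow, ← map_ofNat Polynomial.C 4, ← Polynomial.C_mul]
    norm_num
    ring
  have hmDp : Polynomial.rootMultiplicity (1/2 : ℚ) Dp = 1 := by
    rw [hfac, Polynomial.rootMultiplicity_mul (by rw [← hfac]; exact hDp0)]
    rw [Polynomial.rootMultiplicity_mul (by
      intro h
      rcases mul_eq_zero.mp h with h1 | h1
      · exact Polynomial.X_sub_C_ne_zero _ h1
      · have := congrArg (Polynomial.eval (1/2 : ℚ)) h1
        norm_num at this)]
    rw [Polynomial.rootMultiplicity_eq_zero (by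
      simp [Polynomial.IsRoot]),
      Polynomial.rootMultiplicity_X_sub_C_self,
      Polynomial.rootMultiplicity_eq_zero (p := Polynomial.X + Polynomial.C (1/2 : ℚ)) (by
        intro h
        simp [Polynomial.IsRoot] at h)]
  have hsq : s ^ 2 ≠ 0 := pow_ne_zero _ hs
  have hmr : Polynomial.rootMultiplicity (1/2 : ℚ) (r ^ 2) =
      2 * Polynomial.rootMultiplicity (1/2 : ℚ) r := by
    rw [sq, Polynomial.rootMultiplicity_mul (by rw [← sq]; exact pow_ne_zero _ hr0)]
    ring
  have hms : Polynomial.rootMultiplicity (1/2 : ℚ) (s ^ 2) =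
      2 * Polynomial.rootMultiplicity (1/2 : ℚ) s := by
    rw [sq, Polynomial.rootMultiplicity_mul (by rw [← sq]; exact hsq)]
    ring
  have key := congrArg (Polynomial.rootMultiplicity (1/2 : ℚ)) hpoly
  rw [hmr, Polynomial.rootMultiplicity_mul (mul_ne_zero hDp0 hsq), hmDp, hms] at key
  omega
end
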